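/- arXiv:2405.14721 — 2 statements merged into one kernel-verified Lean document; each statement's English description precedes it below -/
import Mathlib

section
/- Assume z̄ η₀ < 1. Then for each i ∈ K, the sequence of fitness distributions (p_{kn+i})_{n≥0} converges as n → ∞ in total variation on all of [0, η₀] to the probability measure π_i(dx) = Σ_{j=0}^{k−1} (z_{[i−1]} ⋯ z_{[i−j]} / (1 − (z̄ x)^k)) x^j β_{[i−j]} q_{[i−j]}(dx) (the product z_{[i−1]} ⋯ z_{[i−j]} is over 1 ≤ ℓ ≤ j of z_{[i−ℓ]}, equal to 1 when j = 0); in particular no atom appears at η₀. -/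
open MeasureTheory Matrix Filter
open Fin.NatCast

noncomputable section

/-- The maximum of the support (within `[0,1]`) of a measure `μ` on `ℝ`:
`sup {x ∈ [0,1] : μ([x,1]) > 0}`. -/
def etaSup (μ : Measure ℝ) : ℝ :=
  sSup {x | x ∈ Set.Icc (0:ℝ) 1 ∧ 0 < μ (Set.Icc x 1)}

/-- Membership in `I_μ`: `z ≥ 0` and `∑_{n≥0} z^n ∫ x^n β_j q_j(dx) < ∞` for every `j`. -/
def memIm (k : ℕ) (β : Fin k → ℝ) (q : Fin k → Measure ℝ) (z : ℝ) : Prop :=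
  0 ≤ z ∧ ∀ j : Fin k,
    (∑' n : ℕ, ENNReal.ofReal (z ^ n) * ∫⁻ x, ENNReal.ofReal (x ^ n * β j) ∂(q j)) < ⊤

/-- The matrix `A(z)` with entries `A(z)_{i,j} = μ_j^{[i−j]}(z)`, where
`μ_j^i(z) = ∫ (zx)^i / (1 − (zx)^k) β_j q_j(dx)`. -/
def Amat (k : ℕ) (β : Fin k → ℝ) (q : Fin k → Measure ℝ) (z : ℝ) :
    Matrix (Fin k) (Fin k) ℝ :=
  Matrix.of fun i j =>
    ∫ x, (z * x) ^ (((i - j : Fin k) : ℕ)) / (1 - (z * x) ^ k) * β j ∂(q j)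

/-- `ρ_j(z) = ∫ β_j q_j(dx) / (1 − z x)`. -/
def rhoFun (k : ℕ) (β : Fin k → ℝ) (q : Fin k → Measure ℝ) (z : ℝ) (j : Fin k) : ℝ :=
  ∫ x, β j / (1 - z * x) ∂(q j)

/-- Convergence in total variation on a set `s ⊆ ℝ`: for all `ε > 0`, eventually
`|p_n(A) − π(A)| < ε` uniformly over measurable subsets `A ⊆ s`. -/
def TVConvOn (p : ℕ → Measure ℝ) (π : Measure ℝ) (s : Set ℝ) : Prop :=
  ∀ ε : ℝ, 0 < ε → ∃ N : ℕ, ∀ n ≥ N, ∀ A : Set ℝ, MeasurableSet A → A ⊆ s →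
    |((p n) A).toReal - (π A).toReal| < ε

/-- Weak convergence of measures (supported in a compact interval): convergence of integrals of
continuous test functions. -/
def WeakConv (p : ℕ → Measure ℝ) (π : Measure ℝ) : Prop :=
  ∀ f : ℝ → ℝ, Continuous f →
    Tendsto (fun n => ∫ x, f x ∂(p n)) atTop (nhds (∫ x, f x ∂π))

/-- Kingman's periodic recursion:
`p_{n+1}(dx) = β_{[n+1]} q_{[n+1]}(dx) + (1 − β_{[n+1]}) x p_n(dx) / w_n`,
where `w n = ∫ x p_n(dx)`. -/
def KingmanRec (k : ℕ) [NeZero k] (β : Fin k → ℝ) (q : Fin k → Measure ℝ)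
    (p : ℕ → Measure ℝ) (w : ℕ → ℝ) : Prop :=
  (∀ n, w n = ∫ x, x ∂(p n)) ∧
  ∀ n : ℕ, p (n + 1) = ENNReal.ofReal (β ((n + 1 : ℕ) : Fin k)) • q ((n + 1 : ℕ) : Fin k)
    + (p n).withDensity fun x => ENNReal.ofReal ((1 - β ((n + 1 : ℕ) : Fin k)) * x / w n)

/-- The absolutely continuous part of the limiting fitness distribution:
`Σ_{j=0}^{k−1} (z_{[i−1]} ⋯ z_{[i−j]} / (1 − (z̄ x)^k)) x^j β_{[i−j]} q_{[i−j]}(dx)`. -/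
def nuMeas (k : ℕ) [NeZero k] (β : Fin k → ℝ) (q : Fin k → Measure ℝ)
    (zf : Fin k → ℝ) (zbar : ℝ) (i : Fin k) : Measure ℝ :=
  ∑ j ∈ Finset.range k,
    (q (i - (j : Fin k))).withDensity fun x =>
      ENNReal.ofReal ((∏ ℓ ∈ Finset.range j, zf (i - ((ℓ + 1 : ℕ) : Fin k)))
        / (1 - (zbar * x) ^ k) * x ^ j * β (i - (j : Fin k)))


lemma etaSup_nonneg (μ : Measure ℝ) : 0 ≤ etaSup μ := by
  rcases Set.eq_empty_or_nonempty {x | x ∈ Set.Icc (0:ℝ) 1 ∧ 0 < μ (Set.Icc x 1)} with h | h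
  · unfold etaSup; rw [h, Real.sSup_empty]
  · obtain ⟨x, hx⟩ := h
    exact le_trans hx.1.1 (le_csSup ⟨1, fun y hy => hy.1.2⟩ hx)

lemma etaSup_le_one (μ : Measure ℝ) : etaSup μ ≤ 1 :=
  Real.sSup_le (fun y hy => hy.1.2) one_pos.le

lemma null_Ioi_etaSup (μ : Measure ℝ) (hμ : μ (Set.Icc (0:ℝ) 1)ᶜ = 0) :
    μ (Set.Ioi (etaSup μ)) = 0 := by
  have h1 : μ (Set.Ioi (1:ℝ)) = 0 := by
    refine measure_mono_null ?_ hμ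
    intro x hx
    simp only [Set.mem_compl_iff, Set.mem_Icc, not_and, not_le]
    intro _; exact hx
  have hIcc : ∀ y : ℝ, etaSup μ < y → μ (Set.Icc y 1) = 0 := by
    intro y hy
    by_contra h
    have hpos : 0 < μ (Set.Icc y 1) := pos_iff_ne_zero.mpr h
    rcases le_or_gt y 1 with hy1 | hy1
    · rcases le_or_gt 0 y with hy0 | hy0
      · have : y ≤ etaSup μ := le_csSup ⟨1, fun z hz => hz.1.2⟩ ⟨⟨hy0, hy1⟩, hpos⟩
        exact absurd this (not_le.mpr hy)
      · exact absurd hy (not_lt.mpr (le_trans hy0.le (etaSup_nonneg μ)))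
    · have : Set.Icc y 1 = ∅ := Set.Icc_eq_empty (not_le.mpr hy1)
      rw [this] at hpos; simp at hpos
  have hunion : Set.Ioc (etaSup μ) 1 ⊆ ⋃ n : ℕ, Set.Icc (etaSup μ + 1/(n+1)) 1 := by
    intro x hx
    obtain ⟨n, hn⟩ := exists_nat_one_div_lt (sub_pos.mpr hx.1)
    exact Set.mem_iUnion.mpr ⟨n, ⟨by push_cast at hn ⊢; linarith, hx.2⟩⟩
  have h2 : μ (Set.Ioc (etaSup μ) 1) = 0 := by
    refine measure_mono_null hunion (measure_iUnion_null fun n => ?_)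
    refine hIcc _ ?_
    have : (0:ℝ) < 1/((n:ℝ)+1) := by positivity
    linarith
  have : Set.Ioi (etaSup μ) ⊆ Set.Ioc (etaSup μ) 1 ∪ Set.Ioi 1 := by
    intro x hx
    rcases le_or_gt x 1 with h | h
    · exact Or.inl ⟨hx, h⟩
    · exact Or.inr h
  exact measure_mono_null this (measure_union_null h2 h1)

/-- complement of `[0, y]` is null for `y ≥ etaSup μ`. -/
lemma null_compl_Icc (μ : Measure ℝ) (hμ : μ (Set.Icc (0:ℝ) 1)ᶜ = 0) {y : ℝ}
    (hy : etaSup μ ≤ y) : μ (Set.Icc (0:ℝ) y)ᶜ = 0 := by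
  have hsub : (Set.Icc (0:ℝ) y)ᶜ ⊆ (Set.Icc (0:ℝ) 1)ᶜ ∪ Set.Ioi (etaSup μ) := by
    intro x hx
    simp only [Set.mem_compl_iff, Set.mem_Icc, not_and, not_le] at hx
    rcases le_or_gt 0 x with h0 | h0
    · exact Or.inr (lt_of_le_of_lt hy (hx h0))
    · exact Or.inl (by simp only [Set.mem_compl_iff, Set.mem_Icc, not_and, not_le]
                       intro h; linarith)
  exact measure_mono_null hsub (measure_union_null hμ (null_Ioi_etaSup μ hμ))

lemma integrable_id_of_null (μ : Measure ℝ) [IsFiniteMeasure μ]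
    (hμ : μ (Set.Icc (0:ℝ) 1)ᶜ = 0) : Integrable (fun x => x) μ := by
  have hae : ∀ᵐ x ∂μ, x ∈ Set.Icc (0:ℝ) 1 := by
    rw [MeasureTheory.ae_iff]
    convert hμ using 2; rfl
  refine Integrable.mono' (integrable_const 1) measurable_id.aestronglyMeasurable ?_
  filter_upwards [hae] with x hx
  rw [Real.norm_eq_abs, abs_of_nonneg hx.1]; exact hx.2

lemma ae_mem_Icc (μ : Measure ℝ) (hμ : μ (Set.Icc (0:ℝ) 1)ᶜ = 0) :
    ∀ᵐ x ∂μ, x ∈ Set.Icc (0:ℝ) 1 := by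
  rw [MeasureTheory.ae_iff]
  convert hμ using 2; rfl

lemma lintegral_id_eq (μ : Measure ℝ) [IsFiniteMeasure μ]
    (hμ : μ (Set.Icc (0:ℝ) 1)ᶜ = 0) :
    ∫⁻ x, ENNReal.ofReal x ∂μ = ENNReal.ofReal (∫ x, x ∂μ) := by
  rw [ofReal_integral_eq_lintegral_ofReal (integrable_id_of_null μ hμ)]
  filter_upwards [ae_mem_Icc μ hμ] with x hx using hx.1

lemma integral_id_pos (μ : Measure ℝ) [IsFiniteMeasure μ]
    (hμ : μ (Set.Icc (0:ℝ) 1)ᶜ = 0) (h : 0 < etaSup μ) : 0 < ∫ x, x ∂μ := by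
  -- find x0 > 0 with μ(Icc x0 1) > 0
  have hne : {x | x ∈ Set.Icc (0:ℝ) 1 ∧ 0 < μ (Set.Icc x 1)}.Nonempty := by
    by_contra hemp
    rw [Set.not_nonempty_iff_eq_empty] at hemp
    unfold etaSup at h
    rw [hemp, Real.sSup_empty] at h
    exact lt_irrefl 0 h
  obtain ⟨x0, hx0S, hx0pos⟩ : ∃ x0, x0 ∈ {x | x ∈ Set.Icc (0:ℝ) 1 ∧ 0 < μ (Set.Icc x 1)} ∧ 0 < x0 := by
    by_contra hc
    push_neg at hc
    have : etaSup μ ≤ 0 := Real.sSup_le (fun y hy => hc y hy) le_rfl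
    linarith
  -- lower bound by indicator
  have hind : ∀ᵐ x ∂μ, (Set.Icc x0 1).indicator (fun _ => x0) x ≤ x := by
    filter_upwards [ae_mem_Icc μ hμ] with x hx
    by_cases hxm : x ∈ Set.Icc x0 1
    · rw [Set.indicator_of_mem hxm]; exact hxm.1
    · rw [Set.indicator_of_notMem hxm]; exact hx.1
  have hint : ∫ x, (Set.Icc x0 1).indicator (fun _ => x0) x ∂μ ≤ ∫ x, x ∂μ := by
    refine integral_mono_ae ?_ (integrable_id_of_null μ hμ) hind
    exact (integrable_const x0).indicator measurableSet_Icc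
  have : ∫ x, (Set.Icc x0 1).indicator (fun _ => x0) x ∂μ
      = (μ (Set.Icc x0 1)).toReal * x0 := by
    rw [integral_indicator_const _ measurableSet_Icc]; simp [mul_comm, Measure.real]
  rw [this] at hint
  refine lt_of_lt_of_le ?_ hint
  have hfin : μ (Set.Icc x0 1) ≠ ⊤ := measure_ne_top μ _
  have : 0 < (μ (Set.Icc x0 1)).toReal := ENNReal.toReal_pos (pos_iff_ne_zero.mp hx0S.2) hfin
  positivity

section
variable {k : ℕ} [NeZero k] {β : Fin k → ℝ} {q : Fin k → Measure ℝ}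
  {p : ℕ → Measure ℝ} {w : ℕ → ℝ} {η : ℝ}

lemma kingman_invariants
    [∀ i, IsProbabilityMeasure (q i)]
    (hβ : ∀ i, β i ∈ Set.Ioo (0:ℝ) 1)
    (hqnull : ∀ i, q i (Set.Icc (0:ℝ) η)ᶜ = 0)
    (hq1 : ∀ i, q i (Set.Icc (0:ℝ) 1)ᶜ = 0)
    (hqpos : ∀ i, 0 < ∫ x, x ∂ q i)
    (hp₀null : p 0 (Set.Icc (0:ℝ) η)ᶜ = 0)
    (hp₀1 : p 0 Set.univ = 1)
    (hw0 : 0 < w 0)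
    (hη1 : η ≤ 1)
    (hw : ∀ n, w n = ∫ x, x ∂(p n))
    (hstep : ∀ n : ℕ, p (n + 1) = ENNReal.ofReal (β ((n + 1 : ℕ) : Fin k)) • q ((n + 1 : ℕ) : Fin k)
      + (p n).withDensity fun x => ENNReal.ofReal ((1 - β ((n + 1 : ℕ) : Fin k)) * x / w n)) :
    ∀ n, p n (Set.Icc (0:ℝ) η)ᶜ = 0 ∧ p n Set.univ = 1 ∧ 0 < w n ∧
      (∀ m : ℕ, n = m + 1 → β ((n : ℕ) : Fin k) * (∫ x, x ∂ q ((n : ℕ) : Fin k)) ≤ w n) := by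
  have hIccsub : (Set.Icc (0:ℝ) 1)ᶜ ⊆ (Set.Icc (0:ℝ) η)ᶜ :=
    Set.compl_subset_compl.mpr (Set.Icc_subset_Icc le_rfl hη1)
  have hSc : MeasurableSet ((Set.Icc (0:ℝ) η)ᶜ) := measurableSet_Icc.compl
  intro n
  induction n with
  | zero => exact ⟨hp₀null, hp₀1, hw0, fun m hm => by omega⟩
  | succ n ih =>
    obtain ⟨ih1, ih2, ih3, _⟩ := ih
    set i' : Fin k := ((n + 1 : ℕ) : Fin k) with hi'
    have hβ' := hβ i'
    have hpn1 : p n (Set.Icc (0:ℝ) 1)ᶜ = 0 := measure_mono_null hIccsub ih1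
    have hfin : IsFiniteMeasure (p n) := ⟨by rw [ih2]; exact ENNReal.one_lt_top⟩
    have hg : Measurable fun x : ℝ => ENNReal.ofReal ((1 - β i') * x / w n) := by
      fun_prop
    -- support
    have h1 : p (n+1) (Set.Icc (0:ℝ) η)ᶜ = 0 := by
      rw [hstep n, Measure.add_apply, Measure.smul_apply, smul_eq_mul, hqnull i',
        withDensity_apply _ hSc, setLIntegral_measure_zero _ _ ih1]
      simp
    -- mass
    have hlint : ∫⁻ x, ENNReal.ofReal ((1 - β i') * x / w n) ∂(p n)
        = ENNReal.ofReal (1 - β i') := by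
      have hrw : ∀ x : ℝ, (1 - β i') * x / w n = ((1 - β i') / w n) * x := fun x => by ring
      simp_rw [hrw]
      have hnn : 0 ≤ (1 - β i') / w n := by
        apply div_nonneg (by linarith [hβ'.2]) ih3.le
      simp_rw [ENNReal.ofReal_mul hnn]
      rw [lintegral_const_mul _ (by fun_prop), lintegral_id_eq (p n) hpn1, ← hw n,
        ← ENNReal.ofReal_mul hnn, div_mul_cancel₀ _ (ne_of_gt ih3)]
    have h2 : p (n+1) Set.univ = 1 := by
      rw [hstep n, Measure.add_apply, Measure.smul_apply, smul_eq_mul,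
        withDensity_apply _ MeasurableSet.univ, Measure.restrict_univ]
      rw [show ∫⁻ x, ENNReal.ofReal ((1 - β ((n+1:ℕ) : Fin k)) * x / w n) ∂(p n)
          = ENNReal.ofReal (1 - β i') from hlint]
      rw [measure_univ, mul_one, ← ENNReal.ofReal_add (hβ i').1.le (by linarith [hβ'.2])]
      norm_num
    -- lower bound on w (n+1)
    have hp11 : p (n+1) (Set.Icc (0:ℝ) 1)ᶜ = 0 := measure_mono_null hIccsub h1
    have hfin1 : IsFiniteMeasure (p (n+1)) := ⟨by rw [h2]; exact ENNReal.one_lt_top⟩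
    have hwlow : β i' * (∫ x, x ∂ q i') ≤ w (n+1) := by
      have hq1' := hq1 i'
      have : ENNReal.ofReal (β i' * ∫ x, x ∂ q i') ≤ ENNReal.ofReal (w (n+1)) := by
        rw [hw (n+1), ← lintegral_id_eq (p (n+1)) hp11, hstep n,
          lintegral_add_measure, lintegral_smul_measure,
          ENNReal.ofReal_mul (hβ i').1.le, lintegral_id_eq (q i') hq1']
        exact le_add_right le_rfl
      have hwnn : 0 ≤ w (n+1) := by
        rw [hw (n+1)]
        refine integral_nonneg_of_ae ?_
        filter_upwards [ae_mem_Icc (p (n+1)) hp11] with x hx using hx.1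
      exact (ENNReal.ofReal_le_ofReal_iff hwnn).mp this
    have h3 : 0 < w (n+1) := lt_of_lt_of_le (mul_pos hβ'.1 (hqpos i')) hwlow
    exact ⟨h1, h2, h3, fun m hm => hwlow⟩

end

section
variable {k : ℕ} [NeZero k]

noncomputable def uSeq (β : Fin k → ℝ) (w : ℕ → ℝ) (m : ℕ) : ℝ :=
  (1 - β ((m + 1 : ℕ) : Fin k)) / w m

noncomputable def cCoef (β : Fin k → ℝ) (w : ℕ → ℝ) (N j : ℕ) : ℝ :=
  ∏ m ∈ Finset.Ico (N - j) N, uSeq β w m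

lemma uSeq_nonneg {β : Fin k → ℝ} {w : ℕ → ℝ} (hβ : ∀ i, β i ∈ Set.Ioo (0:ℝ) 1)
    (hw : ∀ n, 0 < w n) (m : ℕ) : 0 ≤ uSeq β w m :=
  div_nonneg (by linarith [(hβ ((m+1:ℕ) : Fin k)).2]) (hw m).le

lemma cCoef_nonneg {β : Fin k → ℝ} {w : ℕ → ℝ} (hβ : ∀ i, β i ∈ Set.Ioo (0:ℝ) 1)
    (hw : ∀ n, 0 < w n) (N j : ℕ) : 0 ≤ cCoef β w N j :=
  Finset.prod_nonneg fun m _ => uSeq_nonneg hβ hw m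

lemma cCoef_zero (β : Fin k → ℝ) (w : ℕ → ℝ) (N : ℕ) : cCoef β w N 0 = 1 := by
  simp [cCoef]

lemma cCoef_succ (β : Fin k → ℝ) (w : ℕ → ℝ) {N j : ℕ} (h : j ≤ N) :
    cCoef β w (N + 1) (j + 1) = cCoef β w N j * uSeq β w N := by
  unfold cCoef
  rw [Nat.succ_sub_succ]
  exact Finset.prod_Ico_succ_top (Nat.sub_le N j) _

lemma withDensity_finset_sum {ι : Type*} (s : Finset ι) (μ : ι → Measure ℝ)
    (f : ℝ → ENNReal) : (∑ i ∈ s, μ i).withDensity f = ∑ i ∈ s, (μ i).withDensity f := by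
  classical
  induction s using Finset.induction with
  | empty =>
    simp only [Finset.sum_empty]
    ext A hA
    rw [withDensity_apply _ hA]
    simp
  | insert _ _ hnotmem ih =>
    rw [Finset.sum_insert hnotmem, Finset.sum_insert hnotmem, withDensity_add_measure, ih]

lemma kingman_master
    {β : Fin k → ℝ} {q : Fin k → Measure ℝ} {p : ℕ → Measure ℝ} {w : ℕ → ℝ}
    (hβ : ∀ i, β i ∈ Set.Ioo (0:ℝ) 1)
    (hq1 : ∀ i, q i (Set.Icc (0:ℝ) 1)ᶜ = 0)
    (hp1 : p 0 (Set.Icc (0:ℝ) 1)ᶜ = 0)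
    (hwpos : ∀ n, 0 < w n)
    (hstep : ∀ n : ℕ, p (n + 1) = ENNReal.ofReal (β ((n + 1 : ℕ) : Fin k)) • q ((n + 1 : ℕ) : Fin k)
      + (p n).withDensity fun x => ENNReal.ofReal ((1 - β ((n + 1 : ℕ) : Fin k)) * x / w n)) :
    ∀ N : ℕ, p N = (∑ j ∈ Finset.range N, (q (((N - j : ℕ)) : Fin k)).withDensity
        (fun x => ENNReal.ofReal (cCoef β w N j * (x ^ j * β (((N - j : ℕ)) : Fin k)))))
      + (p 0).withDensity (fun x => ENNReal.ofReal (cCoef β w N N * x ^ N)) := by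
  intro N
  induction N with
  | zero =>
    simp only [Finset.range_zero, Finset.sum_empty, zero_add, Nat.sub_zero, cCoef_zero, pow_zero,
      mul_one]
    rw [withDensity_const]
    simp
  | succ N ih =>
    have hg : Measurable fun x : ℝ => ENNReal.ofReal ((1 - β ((N + 1 : ℕ) : Fin k)) * x / w N) := by
      fun_prop
    rw [hstep N, ih, withDensity_add_measure, withDensity_finset_sum]
    have hterm : ∀ j ∈ Finset.range N,
        ((q (((N - j : ℕ)) : Fin k)).withDensity
          (fun x => ENNReal.ofReal (cCoef β w N j * (x ^ j * β (((N - j : ℕ)) : Fin k))))).withDensity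
            (fun x => ENNReal.ofReal ((1 - β ((N + 1 : ℕ) : Fin k)) * x / w N))
        = (q (((N + 1 - (j + 1) : ℕ)) : Fin k)).withDensity
          (fun x => ENNReal.ofReal (cCoef β w (N+1) (j+1) *
            (x ^ (j+1) * β (((N + 1 - (j+1) : ℕ)) : Fin k)))) := by
      intro j hj
      have hjN : j ≤ N := (Finset.mem_range.mp hj).le
      have hidx : N + 1 - (j + 1) = N - j := Nat.succ_sub_succ N j
      rw [hidx, ← withDensity_mul _ (by fun_prop) hg]
      refine withDensity_congr_ae ?_
      filter_upwards [ae_mem_Icc _ (hq1 (((N - j : ℕ)) : Fin k))] with x hx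
      simp only [Pi.mul_apply]
      have hnn : 0 ≤ cCoef β w N j * (x ^ j * β (((N - j : ℕ)) : Fin k)) := by
        have h1 := cCoef_nonneg hβ hwpos N j
        have h2 := (hβ (((N - j : ℕ)) : Fin k)).1.le
        have h3 : (0:ℝ) ≤ x ^ j := pow_nonneg hx.1 j
        positivity
      rw [← ENNReal.ofReal_mul hnn, cCoef_succ β w hjN]
      congr 1
      unfold uSeq
      rw [pow_succ]
      field_simp
    rw [Finset.sum_congr rfl hterm, Finset.sum_range_succ']
    have h0 : (q (((N + 1 - 0 : ℕ)) : Fin k)).withDensity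
        (fun x => ENNReal.ofReal (cCoef β w (N+1) 0 *
          (x ^ 0 * β (((N + 1 - 0 : ℕ)) : Fin k))))
        = ENNReal.ofReal (β ((N + 1 : ℕ) : Fin k)) • q ((N + 1 : ℕ) : Fin k) := by
      simp only [Nat.sub_zero, cCoef_zero, pow_zero, one_mul, mul_one]
      rw [withDensity_const]
    have hB : ((p 0).withDensity (fun x => ENNReal.ofReal (cCoef β w N N * x ^ N))).withDensity
        (fun x => ENNReal.ofReal ((1 - β ((N + 1 : ℕ) : Fin k)) * x / w N))
        = (p 0).withDensity (fun x => ENNReal.ofReal (cCoef β w (N+1) (N+1) * x ^ (N+1))) := by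
      rw [← withDensity_mul _ (by fun_prop) hg]
      refine withDensity_congr_ae ?_
      filter_upwards [ae_mem_Icc _ hp1] with x hx
      simp only [Pi.mul_apply]
      have hnn : 0 ≤ cCoef β w N N * x ^ N := by
        have h1 := cCoef_nonneg hβ hwpos N N
        have h3 : (0:ℝ) ≤ x ^ N := pow_nonneg hx.1 N
        positivity
      rw [← ENNReal.ofReal_mul hnn, cCoef_succ β w le_rfl]
      congr 1
      unfold uSeq
      rw [pow_succ]
      field_simp
    rw [h0, hB]
    abel

end

section
variable {k : ℕ} [NeZero k]

noncomputable def phiProd (v : Fin k → ℝ) (t : ℕ) : ℝ :=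
  ∏ m ∈ Finset.range t, v ((m : ℕ) : Fin k)

noncomputable def CCascending (v : Fin k → ℝ) (i : Fin k) (j : ℕ) : ℝ :=
  ∏ ℓ ∈ Finset.range j, v (i - ((j : ℕ) : Fin k) + ((ℓ : ℕ) : Fin k))

lemma full_cycle (v : Fin k → ℝ) (c : Fin k) :
    ∏ ℓ ∈ Finset.range k, v (c + ((ℓ : ℕ) : Fin k)) = ∏ r, v r := by
  rw [← Fin.prod_univ_eq_prod_range (fun ℓ => v (c + ((ℓ : ℕ) : Fin k))) k]
  simp only [Fin.cast_val_eq_self]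
  exact Fintype.prod_equiv (Equiv.addLeft c) _ _ (fun x => rfl)

lemma phiProd_add_k (v : Fin k → ℝ) (t : ℕ) :
    phiProd v (t + k) = phiProd v t * ∏ r, v r := by
  unfold phiProd
  rw [Finset.prod_range_add]
  congr 1
  rw [← full_cycle v ((t : ℕ) : Fin k)]
  exact Finset.prod_congr rfl fun ℓ _ => by push_cast; ring_nf

lemma phiProd_cycle (v : Fin k → ℝ) (a r : ℕ) :
    phiProd v (k * a + r) = (∏ r', v r') ^ a * phiProd v r := by
  induction a with
  | zero => simp
  | succ a ih =>
    have : k * (a + 1) + r = (k * a + r) + k := by ring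
    rw [this, phiProd_add_k, ih, pow_succ]
    ring

lemma phiProd_pos {v : Fin k → ℝ} (hv : ∀ r, 0 < v r) (t : ℕ) : 0 < phiProd v t :=
  Finset.prod_pos fun m _ => hv _

lemma CCascending_nonneg {v : Fin k → ℝ} (hv : ∀ r, 0 < v r) (i : Fin k) (j : ℕ) :
    0 ≤ CCascending v i j :=
  (Finset.prod_pos fun m _ => hv _).le

lemma CCascending_add_k (v : Fin k → ℝ) (i : Fin k) (j : ℕ) :
    CCascending v i (j + k) = (∏ r', v r') * CCascending v i j := by
  unfold CCascending
  have hcast : ((k + j : ℕ) : Fin k) = ((j : ℕ) : Fin k) := by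
    push_cast; simp [Fin.natCast_self]
  have hcast2 : ∀ ℓ : ℕ, ((k + ℓ : ℕ) : Fin k) = ((ℓ : ℕ) : Fin k) := fun ℓ => by
    push_cast; simp [Fin.natCast_self]
  rw [show j + k = k + j from Nat.add_comm j k, Finset.prod_range_add]
  congr 1
  · rw [← full_cycle v (i - ((j : ℕ) : Fin k))]
    refine Finset.prod_congr rfl fun ℓ _ => ?_
    congr 1
    rw [hcast]
  · refine Finset.prod_congr rfl fun ℓ _ => ?_
    congr 1
    rw [hcast, hcast2]
lemma CCascending_cycle (v : Fin k → ℝ) (i : Fin k) (a r : ℕ) :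
    CCascending v i (k * a + r) = (∏ r', v r') ^ a * CCascending v i r := by
  induction a with
  | zero => simp
  | succ a ih =>
    have : k * (a + 1) + r = (k * a + r) + k := by ring
    rw [this, CCascending_add_k, ih, pow_succ]
    ring

/-- descending form matches `nuMeas` coefficients -/
lemma CCascending_eq_desc (v : Fin k → ℝ) (i : Fin k) (j : ℕ) :
    CCascending v i j = ∏ ℓ ∈ Finset.range j, v (i - (((ℓ + 1 : ℕ)) : Fin k)) := by
  unfold CCascending
  rw [← Finset.prod_range_reflect (fun ℓ => v (i - ((j:ℕ) : Fin k) + ((ℓ:ℕ) : Fin k))) j]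
  refine Finset.prod_congr rfl fun ℓ hℓ => ?_
  have hℓj : ℓ + 1 ≤ j := Finset.mem_range.mp hℓ
  congr 1
  have : j - 1 - ℓ = j - (ℓ + 1) := by omega
  rw [this, show ((j - (ℓ + 1) : ℕ) : Fin k) = ((j : ℕ) : Fin k) - ((ℓ + 1 : ℕ) : Fin k) from (open Fin.CommRing in Nat.cast_sub hℓj)]
  abel

/-- uniform geometric bounds on `phiProd`-type products -/
lemma phiProd_bounds {v : Fin k → ℝ} (hv : ∀ r, 0 < v r) {zb : ℝ} (hzb : 0 < zb)
    (hzbk : zb ^ k = ∏ r, v r) :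
    ∃ G1 G2 : ℝ, 0 < G2 ∧ 0 < G1 ∧
      ∀ t, G2 * zb ^ t ≤ phiProd v t ∧ phiProd v t ≤ G1 * zb ^ t := by
  have hk : 0 < k := Nat.pos_of_ne_zero (NeZero.ne k)
  have hne : (Finset.range k).Nonempty := ⟨0, Finset.mem_range.mpr hk⟩
  set f : ℕ → ℝ := fun r => phiProd v r / zb ^ r with hf
  refine ⟨(Finset.range k).sup' hne f, (Finset.range k).inf' hne f, ?_, ?_, ?_⟩
  · obtain ⟨r, hr, hreq⟩ := Finset.exists_mem_eq_inf' hne f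
    rw [hreq, hf]
    have := phiProd_pos hv r
    positivity
  · obtain ⟨r, hr, hreq⟩ := Finset.exists_mem_eq_sup' hne f
    rw [hreq, hf]
    have := phiProd_pos hv r
    positivity
  · intro t
    have hdm : k * (t / k) + t % k = t := Nat.div_add_mod t k
    have hsplit : phiProd v t = zb ^ (k * (t / k)) * phiProd v (t % k) := by
      rw [← hdm, phiProd_cycle, ← hzbk, ← pow_mul]
      rw [hdm]
    have hmem : t % k ∈ Finset.range k := Finset.mem_range.mpr (Nat.mod_lt t hk)
    have hlow : (Finset.range k).inf' hne f ≤ f (t % k) := Finset.inf'_le f hmem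
    have hhigh : f (t % k) ≤ (Finset.range k).sup' hne f := Finset.le_sup' f hmem
    have hzbpow : (0:ℝ) < zb ^ (t % k) := by positivity
    have hfeq : phiProd v (t % k) = f (t % k) * zb ^ (t % k) := by
      rw [hf]; field_simp
    have hpowsplit : zb ^ t = zb ^ (k * (t / k)) * zb ^ (t % k) := by
      rw [← pow_add, hdm]
    have hA : (0:ℝ) < zb ^ (k * (t/k)) := by positivity
    constructor
    · calc (Finset.range k).inf' hne f * zb ^ t
          = zb ^ (k * (t/k)) * ((Finset.range k).inf' hne f * zb ^ (t % k)) := by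
            rw [hpowsplit]; ring
        _ ≤ zb ^ (k * (t/k)) * (f (t % k) * zb ^ (t % k)) := by
            refine mul_le_mul_of_nonneg_left ?_ hA.le
            exact mul_le_mul_of_nonneg_right hlow hzbpow.le
        _ = phiProd v t := by rw [hsplit, hfeq]
    · calc phiProd v t = zb ^ (k * (t/k)) * (f (t % k) * zb ^ (t % k)) := by
            rw [hsplit, hfeq]
        _ ≤ zb ^ (k * (t/k)) * ((Finset.range k).sup' hne f * zb ^ (t % k)) := by
            refine mul_le_mul_of_nonneg_left ?_ hA.le
            exact mul_le_mul_of_nonneg_right hhigh hzbpow.le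
        _ = (Finset.range k).sup' hne f * zb ^ t := by rw [hpowsplit]; ring

/-- uniform geometric bound on `CCascending` -/
lemma CCascending_bound {v : Fin k → ℝ} (hv : ∀ r, 0 < v r) {zb : ℝ} (hzb : 0 < zb)
    (hzbk : zb ^ k = ∏ r, v r) (i : Fin k) :
    ∃ G3 : ℝ, 0 < G3 ∧ ∀ j, CCascending v i j ≤ G3 * zb ^ j := by
  have hk : 0 < k := Nat.pos_of_ne_zero (NeZero.ne k)
  have hne : (Finset.range k).Nonempty := ⟨0, Finset.mem_range.mpr hk⟩
  set f : ℕ → ℝ := fun r => CCascending v i r / zb ^ r with hf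
  refine ⟨(Finset.range k).sup' hne f, ?_, ?_⟩
  · obtain ⟨r, hr, hreq⟩ := Finset.exists_mem_eq_sup' hne f
    rw [hreq, hf]
    have : 0 < CCascending v i r := Finset.prod_pos fun m _ => hv _
    positivity
  · intro j
    have hdm : k * (j / k) + j % k = j := Nat.div_add_mod j k
    have hsplit : CCascending v i j = zb ^ (k * (j / k)) * CCascending v i (j % k) := by
      rw [← hdm, CCascending_cycle, ← hzbk, ← pow_mul]
      rw [hdm]
    have hmem : j % k ∈ Finset.range k := Finset.mem_range.mpr (Nat.mod_lt j hk)
    have hhigh : f (j % k) ≤ (Finset.range k).sup' hne f := Finset.le_sup' f hmem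
    have hfeq : CCascending v i (j % k) = f (j % k) * zb ^ (j % k) := by
      rw [hf]; field_simp
    have hpowsplit : zb ^ j = zb ^ (k * (j / k)) * zb ^ (j % k) := by
      rw [← pow_add, hdm]
    have h1 : (0:ℝ) < zb ^ (k * (j/k)) := by positivity
    have h2 : (0:ℝ) < zb ^ (j % k) := by positivity
    calc CCascending v i j = zb ^ (k * (j/k)) * (f (j % k) * zb ^ (j % k)) := by
          rw [hsplit, hfeq]
      _ ≤ zb ^ (k * (j/k)) * ((Finset.range k).sup' hne f * zb ^ (j % k)) := by
          refine mul_le_mul_of_nonneg_left ?_ h1.le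
          exact mul_le_mul_of_nonneg_right hhigh h2.le
      _ = (Finset.range k).sup' hne f * zb ^ j := by rw [hpowsplit]; ring

end

section
variable {k : ℕ} [NeZero k]

lemma eventual_step_bound {u : ℕ → ℝ} {v : Fin k → ℝ} (hv : ∀ r, 0 < v r) {lam : ℝ}
    (hlam : 1 < lam)
    (hU : ∀ d : ℕ, Tendsto (fun n => u (k * n + d)) atTop (nhds (v ((d : ℕ) : Fin k)))) :
    ∃ M, ∀ m, M ≤ m → u m ≤ lam * v ((m : ℕ) : Fin k) := by
  have hk : 0 < k := Nat.pos_of_ne_zero (NeZero.ne k)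
  have h1 : ∀ r : Fin k, ∃ Mr, ∀ n, Mr ≤ n → u (k * n + r.val) ≤ lam * v r := by
    intro r
    have hlt : v ((r.val : ℕ) : Fin k) < lam * v r := by
      rw [Fin.cast_val_eq_self]
      nlinarith [hv r]
    have := Filter.Tendsto.eventually_lt_const hlt (hU r.val)
    rw [Filter.eventually_atTop] at this
    obtain ⟨Mr, hMr⟩ := this
    exact ⟨Mr, fun n hn => (hMr n hn).le⟩
  choose Mf hMf using h1
  refine ⟨k * (Finset.univ.sup Mf + 1), fun m hm => ?_⟩
  set r : Fin k := ((m : ℕ) : Fin k) with hr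
  have hval : r.val = m % k := Fin.val_natCast m k
  have hdm : k * (m / k) + r.val = m := by rw [hval]; exact Nat.div_add_mod m k
  have hdiv : Mf r ≤ m / k := by
    have h2 : Finset.univ.sup Mf + 1 ≤ m / k := by
      rw [Nat.le_div_iff_mul_le hk]
      calc (Finset.univ.sup Mf + 1) * k = k * (Finset.univ.sup Mf + 1) := by ring
        _ ≤ m := hm
    exact le_trans (Nat.le_succ_of_le (Finset.le_sup (Finset.mem_univ r))) h2
  have := hMf r (m / k) hdiv
  rwa [hdm] at this

lemma window_geom_bound {u : ℕ → ℝ} {v : Fin k → ℝ} (hv : ∀ r, 0 < v r)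
    (hu : ∀ m, 0 ≤ u m) {zb : ℝ} (hzb : 0 < zb) (hzbk : zb ^ k = ∏ r, v r)
    {η θ : ℝ} (hη : 0 < η) (hsθ : zb * η < θ)
    (hU : ∀ d : ℕ, Tendsto (fun n => u (k * n + d)) atTop (nhds (v ((d : ℕ) : Fin k)))) :
    ∃ D, 0 < D ∧ ∃ M, ∀ N j : ℕ, M ≤ N → j ≤ N →
      (∏ m ∈ Finset.Ico (N - j) N, u m) * η ^ j ≤ D * θ ^ j := by
  have hs : 0 < zb * η := mul_pos hzb hη
  have hθ : 0 < θ := lt_trans hs hsθ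
  set lam : ℝ := θ / (zb * η) with hlamdef
  have hlam : 1 < lam := (one_lt_div hs).mpr hsθ
  have hlampos : 0 < lam := lt_trans one_pos hlam
  obtain ⟨M, hM⟩ := eventual_step_bound hv hlam hU
  obtain ⟨G1, G2, hG2, hG1, hbounds⟩ := phiProd_bounds hv hzb hzbk
  set Umax : ℝ := 1 + ∑ m ∈ Finset.range M, u m with hUdef
  have hUmax1 : 1 ≤ Umax := by
    have : 0 ≤ ∑ m ∈ Finset.range M, u m := Finset.sum_nonneg fun m _ => hu m
    linarith
  have hUm : ∀ m, m < M → u m ≤ Umax := by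
    intro m hm
    have h1 : u m ≤ ∑ m' ∈ Finset.range M, u m' :=
      Finset.single_le_sum (fun m' _ => hu m') (Finset.mem_range.mpr hm)
    linarith
  set Cmax : ℝ := max 1 (Umax * η / θ) with hCdef
  have hCmax1 : 1 ≤ Cmax := le_max_left _ _
  have hCmaxθ : Umax * η ≤ Cmax * θ := by
    have h1 : Umax * η / θ ≤ Cmax := le_max_right _ _
    calc Umax * η = (Umax * η / θ) * θ := by field_simp
      _ ≤ Cmax * θ := mul_le_mul_of_nonneg_right h1 hθ.le
  -- tail window bound
  have htail : ∀ a b : ℕ, M ≤ a → a ≤ b →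
      (∏ m ∈ Finset.Ico a b, u m) * η ^ (b - a) ≤ (G1 / G2) * θ ^ (b - a) := by
    intro a b hMa hab
    have hstep1 : (∏ m ∈ Finset.Ico a b, u m) ≤
        ∏ m ∈ Finset.Ico a b, (lam * v ((m : ℕ) : Fin k)) := by
      refine Finset.prod_le_prod (fun m _ => hu m) (fun m hm => ?_)
      exact hM m (le_trans hMa (Finset.mem_Ico.mp hm).1)
    have hstep2 : ∏ m ∈ Finset.Ico a b, (lam * v ((m : ℕ) : Fin k))
        = lam ^ (b - a) * ∏ m ∈ Finset.Ico a b, v ((m : ℕ) : Fin k) := by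
      rw [Finset.prod_mul_distrib, Finset.prod_const, Nat.card_Ico]
    have hphipos : 0 < phiProd v a := phiProd_pos hv a
    have hW : ∏ m ∈ Finset.Ico a b, v ((m : ℕ) : Fin k) = phiProd v b / phiProd v a := by
      rw [eq_div_iff (ne_of_gt hphipos), mul_comm]
      exact Finset.prod_range_mul_prod_Ico _ hab
    have hWle : ∏ m ∈ Finset.Ico a b, v ((m : ℕ) : Fin k) ≤ (G1 / G2) * zb ^ (b - a) := by
      rw [hW]
      have h1 : phiProd v b ≤ G1 * zb ^ b := (hbounds b).2
      have h2 : G2 * zb ^ a ≤ phiProd v a := (hbounds a).1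
      have h3 : 0 < G2 * zb ^ a := by positivity
      calc phiProd v b / phiProd v a ≤ (G1 * zb ^ b) / (G2 * zb ^ a) := by
            apply div_le_div₀ (by positivity) h1 h3 h2
        _ = (G1 / G2) * zb ^ (b - a) := by
            rw [show b = a + (b - a) from (Nat.add_sub_cancel' hab).symm, pow_add]
            field_simp
            ring_nf
            simp
    have hvpos : (0:ℝ) ≤ ∏ m ∈ Finset.Ico a b, v ((m : ℕ) : Fin k) :=
      Finset.prod_nonneg fun m _ => (hv _).le
    calc (∏ m ∈ Finset.Ico a b, u m) * η ^ (b - a)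
        ≤ (lam ^ (b - a) * ∏ m ∈ Finset.Ico a b, v ((m : ℕ) : Fin k)) * η ^ (b - a) := by
          refine mul_le_mul_of_nonneg_right (le_trans hstep1 (le_of_eq hstep2)) (by positivity)
      _ ≤ (lam ^ (b - a) * ((G1 / G2) * zb ^ (b - a))) * η ^ (b - a) := by
          refine mul_le_mul_of_nonneg_right (mul_le_mul_of_nonneg_left hWle (by positivity))
            (by positivity)
      _ = (G1 / G2) * (lam * zb * η) ^ (b - a) := by
          rw [mul_pow, mul_pow]; ring
      _ = (G1 / G2) * θ ^ (b - a) := by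
          congr 2
          rw [hlamdef]
          field_simp
  refine ⟨Cmax ^ M * (G1 / G2), by positivity, M, fun N j hMN hjN => ?_⟩
  rcases le_or_gt M (N - j) with hcase | hcase
  · -- pure tail
    have := htail (N - j) N hcase (Nat.sub_le N j)
    have hd : N - (N - j) = j := Nat.sub_sub_self hjN
    rw [hd] at this
    refine le_trans this ?_
    have hpow : (1:ℝ) ≤ Cmax ^ M := one_le_pow₀ hCmax1
    calc (G1 / G2) * θ ^ j = 1 * ((G1 / G2) * θ ^ j) := by ring
      _ ≤ Cmax ^ M * ((G1 / G2) * θ ^ j) := by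
          refine mul_le_mul_of_nonneg_right hpow ?_
          have := pow_pos hθ j
          have := div_pos hG1 hG2
          positivity
      _ = Cmax ^ M * (G1 / G2) * θ ^ j := by ring
  · -- head + tail
    have haM : N - j < M := hcase
    set a := N - j with hadef
    have haj : a + j = N := Nat.sub_add_cancel hjN
    set hd : ℕ := M - a with hddef
    set tl : ℕ := N - M with htldef
    have hsum : hd + tl = j := by omega
    have hsplit : ∏ m ∈ Finset.Ico a N, u m
        = (∏ m ∈ Finset.Ico a M, u m) * ∏ m ∈ Finset.Ico M N, u m :=
      (Finset.prod_Ico_consecutive _ (le_of_lt haM) hMN).symm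
    have hhead : ∏ m ∈ Finset.Ico a M, u m ≤ Umax ^ hd := by
      calc ∏ m ∈ Finset.Ico a M, u m ≤ ∏ m ∈ Finset.Ico a M, Umax := by
            refine Finset.prod_le_prod (fun m _ => hu m) (fun m hm => hUm m (Finset.mem_Ico.mp hm).2)
        _ = Umax ^ hd := by rw [Finset.prod_const, Nat.card_Ico]
    have htl : (∏ m ∈ Finset.Ico M N, u m) * η ^ tl ≤ (G1 / G2) * θ ^ tl := htail M N le_rfl hMN
    have hηj : η ^ j = η ^ hd * η ^ tl := by rw [← pow_add, hsum]
    have hupos : (0:ℝ) ≤ ∏ m ∈ Finset.Ico M N, u m := Finset.prod_nonneg fun m _ => hu m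
    have huapos : (0:ℝ) ≤ ∏ m ∈ Finset.Ico a M, u m := Finset.prod_nonneg fun m _ => hu m
    calc (∏ m ∈ Finset.Ico a N, u m) * η ^ j
        = ((∏ m ∈ Finset.Ico a M, u m) * η ^ hd) * ((∏ m ∈ Finset.Ico M N, u m) * η ^ tl) := by
          rw [hsplit, hηj]; ring
      _ ≤ (Umax ^ hd * η ^ hd) * ((G1 / G2) * θ ^ tl) := by
          refine mul_le_mul ?_ htl (by positivity) (by positivity)
          exact mul_le_mul_of_nonneg_right hhead (by positivity)
      _ = (Umax * η) ^ hd * ((G1 / G2) * θ ^ tl) := by rw [mul_pow]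
      _ ≤ (Cmax * θ) ^ hd * ((G1 / G2) * θ ^ tl) := by
          refine mul_le_mul_of_nonneg_right (pow_le_pow_left₀ (by positivity) hCmaxθ hd) (by positivity)
      _ = Cmax ^ hd * (G1 / G2) * θ ^ j := by
          rw [← hsum, pow_add, mul_pow]; ring
      _ = Cmax ^ hd * ((G1 / G2) * θ ^ j) := by ring
      _ ≤ Cmax ^ M * ((G1 / G2) * θ ^ j) := by
          have h5 : Cmax ^ hd ≤ Cmax ^ M := pow_le_pow_right₀ hCmax1 (by omega)
          have h6 : (0:ℝ) < θ ^ j := pow_pos hθ j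
          have h7 : (0:ℝ) < G1 / G2 := div_pos hG1 hG2
          exact mul_le_mul_of_nonneg_right h5 (by positivity)
      _ = Cmax ^ M * (G1 / G2) * θ ^ j := by ring

lemma window_tendsto {u : ℕ → ℝ} {v : Fin k → ℝ}
    (hU : ∀ d : ℕ, Tendsto (fun n => u (k * n + d)) atTop (nhds (v ((d : ℕ) : Fin k))))
    (i : Fin k) (j : ℕ) :
    Tendsto (fun n => ∏ m ∈ Finset.Ico ((k * n + i.val) - j) (k * n + i.val), u m)
      atTop (nhds (CCascending v i j)) := by
  have hk : 0 < k := Nat.pos_of_ne_zero (NeZero.ne k)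
  have hjk : j ≤ k * j := Nat.le_mul_of_pos_left j hk
  set dd : ℕ → ℕ := fun ℓ => (k * j - j) + i.val + ℓ with hdd
  have hlim : Tendsto (fun n => ∏ ℓ ∈ Finset.range j, u (k * (n - j) + dd ℓ)) atTop
      (nhds (∏ ℓ ∈ Finset.range j, v ((dd ℓ : ℕ) : Fin k))) := by
    refine tendsto_finset_prod _ (fun ℓ _ => ?_)
    exact (hU (dd ℓ)).comp (tendsto_sub_atTop_nat j)
  have hval : ∏ ℓ ∈ Finset.range j, v ((dd ℓ : ℕ) : Fin k) = CCascending v i j := by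
    unfold CCascending
    refine Finset.prod_congr rfl fun ℓ _ => ?_
    congr 1
    rw [hdd]
    simp only []
    push_cast [Nat.cast_sub hjk]
    simp [Fin.natCast_self, Fin.cast_val_eq_self]
    rw [show ((k * j - j : ℕ) : Fin k) = ((k * j : ℕ) : Fin k) - ((j : ℕ) : Fin k) from (open Fin.CommRing in Nat.cast_sub hjk)]
    rw [Fin.natCast_eq_zero.mpr (Dvd.intro j rfl)]
    abel
  rw [hval] at hlim
  refine Tendsto.congr' ?_ hlim
  rw [Filter.eventuallyEq_iff_exists_mem]
  refine ⟨Set.Ici j, Filter.mem_atTop j, fun n hn => ?_⟩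
  have hn' : j ≤ n := hn
  have hjN : j ≤ k * n + i.val := le_trans hn' (le_trans (Nat.le_mul_of_pos_left n hk) (Nat.le_add_right _ _))
  simp only []
  symm
  rw [Finset.prod_Ico_eq_prod_range]
  have hcard : (k * n + i.val) - ((k * n + i.val) - j) = j := Nat.sub_sub_self hjN
  rw [hcard]
  refine Finset.prod_congr rfl fun ℓ _ => congrArg u ?_
  have h1 : k * (n - j) = k * n - k * j := Nat.mul_sub k n j
  have h3 : k * j ≤ k * n := Nat.mul_le_mul_left k hn'
  have h4 : j ≤ k * n := le_trans hjk h3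
  rw [hdd]
  simp only []
  omega

end

section
variable {k : ℕ} [NeZero k]

lemma withDensity_apply_const_mul (μ : Measure ℝ) {c : ℝ} (hc : 0 ≤ c) {f : ℝ → ℝ}
    (hf : Measurable f) {A : Set ℝ} (hA : MeasurableSet A) :
    (μ.withDensity fun x => ENNReal.ofReal (c * f x)) A
      = ENNReal.ofReal c * ∫⁻ x in A, ENNReal.ofReal (f x) ∂μ := by
  rw [withDensity_apply _ hA]
  simp_rw [ENNReal.ofReal_mul hc]
  rw [lintegral_const_mul _ (by fun_prop)]

/-- Expansion of `nuMeas` on sets `A ⊆ [0,η]` as a geometric series. -/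
lemma nuMeas_apply_eq (β : Fin k → ℝ) (q : Fin k → Measure ℝ) (zf : Fin k → ℝ) (zbar : ℝ)
    (i : Fin k) (hβ : ∀ r, β r ∈ Set.Ioo (0:ℝ) 1) (hzf : ∀ r, 0 < zf r)
    (hzb : 0 < zbar) (hzbk : zbar ^ k = ∏ r, zf r) {η : ℝ} (hη0 : 0 ≤ η)
    (hs1 : zbar * η < 1) {A : Set ℝ} (hA : MeasurableSet A) (hAsub : A ⊆ Set.Icc 0 η) :
    nuMeas k β q zf zbar i A
      = ∑' j : ℕ, ENNReal.ofReal (CCascending zf i j) *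
          ∫⁻ x in A, ENNReal.ofReal (x ^ j * β (i - ((j : ℕ) : Fin k)))
            ∂ q (i - ((j : ℕ) : Fin k)) := by
  classical
  set g : ℕ → ENNReal := fun j => ENNReal.ofReal (CCascending zf i j) *
      ∫⁻ x in A, ENNReal.ofReal (x ^ j * β (i - ((j : ℕ) : Fin k)))
        ∂ q (i - ((j : ℕ) : Fin k)) with hgdef
  have hcastk : ∀ m j0 : ℕ, ((k * m + j0 : ℕ) : Fin k) = ((j0 : ℕ) : Fin k) := by
    intro m j0; push_cast; simp [Fin.natCast_self]
  -- each block
  have hblock : ∀ j0 ∈ Finset.range k,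
      ((q (i - ((j0 : ℕ) : Fin k))).withDensity fun x =>
        ENNReal.ofReal ((∏ ℓ ∈ Finset.range j0, zf (i - ((ℓ + 1 : ℕ) : Fin k)))
          / (1 - (zbar * x) ^ k) * x ^ j0 * β (i - ((j0 : ℕ) : Fin k)))) A
      = ∑' m : ℕ, g (k * m + j0) := by
    intro j0 _
    set β' : ℝ := β (i - ((j0 : ℕ) : Fin k)) with hβ'def
    have hβ'pos := (hβ (i - ((j0 : ℕ) : Fin k))).1
    rw [withDensity_apply _ hA]
    have hpt : ∀ x ∈ A, ENNReal.ofReal ((∏ ℓ ∈ Finset.range j0, zf (i - ((ℓ + 1 : ℕ) : Fin k)))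
        / (1 - (zbar * x) ^ k) * x ^ j0 * β')
        = ∑' m : ℕ, ENNReal.ofReal (CCascending zf i (k * m + j0) * (x ^ (k * m + j0) * β')) := by
      intro x hx
      obtain ⟨hx0, hxη⟩ := hAsub hx
      have hyx : zbar * x < 1 := lt_of_le_of_lt (mul_le_mul_of_nonneg_left hxη hzb.le) hs1
      have hy0 : 0 ≤ (zbar * x) ^ k := by positivity
      have hy1 : (zbar * x) ^ k < 1 := pow_lt_one₀ (by positivity) hyx (NeZero.ne k)
      have hterm : ∀ m : ℕ, CCascending zf i (k * m + j0) * (x ^ (k * m + j0) * β')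
          = (CCascending zf i j0 * (x ^ j0 * β')) * ((zbar * x) ^ k) ^ m := by
        intro m
        rw [CCascending_cycle, ← hzbk, pow_add, pow_mul, mul_pow zbar x, mul_pow]
        ring
      have hreal : (∏ ℓ ∈ Finset.range j0, zf (i - ((ℓ + 1 : ℕ) : Fin k)))
          / (1 - (zbar * x) ^ k) * x ^ j0 * β'
          = ∑' m : ℕ, CCascending zf i (k * m + j0) * (x ^ (k * m + j0) * β') := by
        rw [tsum_congr hterm, tsum_mul_left, tsum_geometric_of_lt_one hy0 hy1,
          ← CCascending_eq_desc]
        rw [div_eq_mul_inv]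
        ring
      rw [hreal]
      refine ENNReal.ofReal_tsum_of_nonneg (fun m => ?_) ?_
      · have h1 : 0 ≤ CCascending zf i (k * m + j0) := CCascending_nonneg hzf i _
        have h2 : 0 ≤ x ^ (k * m + j0) := by positivity
        positivity
      · refine Summable.congr ((summable_geometric_of_lt_one hy0 hy1).mul_left
          (CCascending zf i j0 * (x ^ j0 * β'))) (fun m => (hterm m).symm)
    rw [setLIntegral_congr_fun hA hpt,
      lintegral_tsum (fun m => (by fun_prop : Measurable fun x : ℝ =>
        ENNReal.ofReal (CCascending zf i (k * m + j0) * (x ^ (k * m + j0) * β'))).aemeasurable)]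
    refine tsum_congr fun m => ?_
    rw [hgdef]
    simp only [hcastk m j0]
    simp_rw [ENNReal.ofReal_mul (CCascending_nonneg hzf i (k * m + j0))]
    rw [lintegral_const_mul _ (by fun_prop)]
  -- sum the blocks and regroup
  unfold nuMeas
  rw [show ((∑ j ∈ Finset.range k,
      (q (i - (j : Fin k))).withDensity fun x =>
        ENNReal.ofReal ((∏ ℓ ∈ Finset.range j, zf (i - ((ℓ + 1 : ℕ) : Fin k)))
          / (1 - (zbar * x) ^ k) * x ^ j * β (i - (j : Fin k)))) A)
    = ∑ j0 ∈ Finset.range k, ((q (i - (j0 : Fin k))).withDensity fun x =>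
        ENNReal.ofReal ((∏ ℓ ∈ Finset.range j0, zf (i - ((ℓ + 1 : ℕ) : Fin k)))
          / (1 - (zbar * x) ^ k) * x ^ j0 * β (i - (j0 : Fin k)))) A from by
      rw [Measure.coe_finset_sum]; simp]
  rw [Finset.sum_congr rfl hblock]
  -- now : ∑_{j0 ∈ range k} ∑'_m g (k*m+j0) = ∑'_j g j
  have hregroup : ∑' j : ℕ, g j = ∑ j0 ∈ Finset.range k, ∑' m : ℕ, g (k * m + j0) := by
    calc ∑' j : ℕ, g j = ∑' p : ℕ × Fin k, g ((Nat.divModEquiv k).symm p) :=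
          (Equiv.tsum_eq (Nat.divModEquiv k).symm g).symm
      _ = ∑' p : ℕ × Fin k, g (p.1 * k + (p.2 : ℕ)) := tsum_congr (fun p => rfl)
      _ = ∑' (a : ℕ) (r : Fin k), g (a * k + (r : ℕ)) :=
          ENNReal.tsum_prod (f := fun (a : ℕ) (r : Fin k) => g (a * k + (r : ℕ)))
      _ = ∑' (r : Fin k) (a : ℕ), g (a * k + (r : ℕ)) := ENNReal.tsum_comm
      _ = ∑ r : Fin k, ∑' a : ℕ, g (a * k + (r : ℕ)) := tsum_fintype _
      _ = ∑ j0 ∈ Finset.range k, ∑' m : ℕ, g (k * m + j0) := by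
          rw [← Fin.sum_univ_eq_sum_range (fun j0 => ∑' m : ℕ, g (k * m + j0)) k]
          exact Finset.sum_congr rfl fun r _ => tsum_congr fun m => by rw [Nat.mul_comm]
  rw [hregroup]

/-- Evaluation of `p N` on measurable `A`. -/
lemma pN_apply_eq {β : Fin k → ℝ} {q : Fin k → Measure ℝ} {p : ℕ → Measure ℝ} {w : ℕ → ℝ}
    (hβ : ∀ r, β r ∈ Set.Ioo (0:ℝ) 1)
    (hq1 : ∀ r, q r (Set.Icc (0:ℝ) 1)ᶜ = 0)
    (hp1 : p 0 (Set.Icc (0:ℝ) 1)ᶜ = 0)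
    (hwpos : ∀ n, 0 < w n)
    (hstep : ∀ n : ℕ, p (n + 1) = ENNReal.ofReal (β ((n + 1 : ℕ) : Fin k)) • q ((n + 1 : ℕ) : Fin k)
      + (p n).withDensity fun x => ENNReal.ofReal ((1 - β ((n + 1 : ℕ) : Fin k)) * x / w n))
    (i : Fin k) (n : ℕ) {A : Set ℝ} (hA : MeasurableSet A) :
    p (k * n + (i : ℕ)) A
      = (∑ j ∈ Finset.range (k * n + (i : ℕ)),
          ENNReal.ofReal (cCoef β w (k * n + (i : ℕ)) j) *
            ∫⁻ x in A, ENNReal.ofReal (x ^ j * β (i - ((j : ℕ) : Fin k)))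
              ∂ q (i - ((j : ℕ) : Fin k)))
        + ENNReal.ofReal (cCoef β w (k * n + (i : ℕ)) (k * n + (i : ℕ))) *
            ∫⁻ x in A, ENNReal.ofReal (x ^ (k * n + (i : ℕ))) ∂ (p 0) := by
  set N := k * n + (i : ℕ) with hNdef
  have hcast : ∀ j : ℕ, j ≤ N → ((N - j : ℕ) : Fin k) = i - ((j : ℕ) : Fin k) := by
    intro j hj
    rw [show ((N - j : ℕ) : Fin k) = ((N : ℕ) : Fin k) - ((j : ℕ) : Fin k) from (open Fin.CommRing in Nat.cast_sub hj)]
    congr 1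
    rw [hNdef]
    push_cast
    simp [Fin.natCast_self, Fin.cast_val_eq_self]
  rw [kingman_master hβ hq1 hp1 hwpos hstep N, Measure.add_apply]
  congr 1
  · rw [Measure.coe_finset_sum, Finset.sum_apply]
    refine Finset.sum_congr rfl fun j hj => ?_
    have hjN : j ≤ N := (Finset.mem_range.mp hj).le
    rw [hcast j hjN,
      withDensity_apply_const_mul _ (cCoef_nonneg hβ hwpos N j) (by fun_prop) hA]
  · exact withDensity_apply_const_mul _ (cCoef_nonneg hβ hwpos N N) (by fun_prop) hA

end


set_option maxHeartbeats 2000000 in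
/-- Assume `z̄ η₀ < 1`. Then for each `i ∈ K`, the sequence `(p_{kn+i})_n`
converges in total variation on all of `[0, η₀]` to the probability measure
`π_i = Σ_j (z_{[i−1]} ⋯ z_{[i−j]}/(1 − (z̄x)^k)) x^j β_{[i−j]} q_{[i−j]}(dx)`;
in particular no atom appears at `η₀`. -/
theorem stmt_11 (k : ℕ) [NeZero k] (β : Fin k → ℝ) (q : Fin k → Measure ℝ)
    [∀ i, IsProbabilityMeasure (q i)]
    (p₀ : Measure ℝ) [IsProbabilityMeasure p₀]
    (hβ : ∀ i, β i ∈ Set.Ioo (0:ℝ) 1)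
    (hq : ∀ i, q i (Set.Icc (0:ℝ) 1)ᶜ = 0) (hp₀ : p₀ (Set.Icc (0:ℝ) 1)ᶜ = 0)
    (hη : ∀ i, 0 < etaSup (q i) ∧ etaSup (q i) ≤ etaSup p₀)
    (p : ℕ → Measure ℝ) (w : ℕ → ℝ)
    (hp0 : p 0 = p₀) (hrec : KingmanRec k β q p w)
    (wbar : Fin k → ℝ)
    (hconv : ∀ i : Fin k, Tendsto (fun n => w (k * n + (i : ℕ))) atTop (nhds (wbar i)))
    (zf : Fin k → ℝ) (hzf : ∀ i : Fin k, zf i = (1 - β (i + 1)) / wbar i)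
    (zbar : ℝ) (hzbar : zbar = (∏ i, zf i) ^ ((1 : ℝ) / k))
    (hlt : zbar * etaSup p₀ < 1) :
    ∀ i : Fin k,
      IsProbabilityMeasure (nuMeas k β q zf zbar i) ∧
      TVConvOn (fun n => p (k * n + (i : ℕ))) (nuMeas k β q zf zbar i)
        (Set.Icc 0 (etaSup p₀)) := by
  obtain ⟨hw, hstep⟩ := hrec
  have hk : 0 < k := Nat.pos_of_ne_zero (NeZero.ne k)
  set η := etaSup p₀ with hηdef
  have hη0 : 0 < η := lt_of_lt_of_le (hη 0).1 (hη 0).2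
  have hη1 : η ≤ 1 := etaSup_le_one p₀
  have hp01 : p 0 (Set.Icc (0:ℝ) 1)ᶜ = 0 := by rw [hp0]; exact hp₀
  have hp0mass : p 0 Set.univ = 1 := by rw [hp0]; exact measure_univ
  have hp0null : p 0 (Set.Icc (0:ℝ) η)ᶜ = 0 := by
    rw [hp0]; exact null_compl_Icc p₀ hp₀ le_rfl
  have hqnull : ∀ r, q r (Set.Icc (0:ℝ) η)ᶜ = 0 := fun r => null_compl_Icc (q r) (hq r) (hη r).2
  have hqpos : ∀ r, 0 < ∫ x, x ∂ q r := fun r => integral_id_pos (q r) (hq r) (hη r).1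
  have hw0 : 0 < w 0 := by
    rw [hw 0, hp0]; exact integral_id_pos p₀ hp₀ hη0
  have hinv := kingman_invariants hβ hqnull hq hqpos hp0null hp0mass hw0 hη1 hw hstep
  have hpnull : ∀ n, p n (Set.Icc (0:ℝ) η)ᶜ = 0 := fun n => (hinv n).1
  have hpmass : ∀ n, p n Set.univ = 1 := fun n => (hinv n).2.1
  have hwpos : ∀ n, 0 < w n := fun n => (hinv n).2.2.1
  -- positivity of wbar
  have hwbar : ∀ r : Fin k, 0 < wbar r := by
    intro r
    have hlow : ∀ᶠ n in atTop, β r * ∫ x, x ∂ q r ≤ w (k * n + (r : ℕ)) := by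
      rw [eventually_atTop]
      refine ⟨1, fun n hn => ?_⟩
      have hpos : 1 ≤ k * n := le_trans hk (Nat.le_mul_of_pos_right k hn)
      obtain ⟨m, hm⟩ : ∃ m, k * n + (r : ℕ) = m + 1 := ⟨k * n + (r : ℕ) - 1, by omega⟩
      have h4 := (hinv (k * n + (r : ℕ))).2.2.2 m hm
      have hcast : ((k * n + (r : ℕ) : ℕ) : Fin k) = r := by
        push_cast; simp [Fin.natCast_self, Fin.cast_val_eq_self]
      rwa [hcast] at h4
    exact lt_of_lt_of_le (mul_pos (hβ r).1 (hqpos r)) (ge_of_tendsto (hconv r) hlow)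
  have hzfpos : ∀ r, 0 < zf r := by
    intro r; rw [hzf r]
    exact div_pos (by linarith [(hβ (r+1)).2]) (hwbar r)
  have hP : 0 < ∏ r, zf r := Finset.prod_pos fun r _ => hzfpos r
  have hzb : 0 < zbar := by rw [hzbar]; exact Real.rpow_pos_of_pos hP _
  have hzbk : zbar ^ k = ∏ r, zf r := by
    rw [hzbar, ← Real.rpow_natCast ((∏ r, zf r) ^ ((1:ℝ)/k)) k, ← Real.rpow_mul hP.le]
    rw [show (1:ℝ)/k * k = 1 from by
      field_simp]
    exact Real.rpow_one _
  have hs0 : 0 < zbar * η := mul_pos hzb hη0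
  have hs1 : zbar * η < 1 := hlt
  set θ : ℝ := (1 + zbar * η)/2 with hθdef
  have hsθ : zbar * η < θ := by rw [hθdef]; linarith
  have hθ1 : θ < 1 := by rw [hθdef]; linarith
  have hθ0 : 0 < θ := lt_trans hs0 hsθ
  -- limits of the one-step ratios
  have hU : ∀ d : ℕ, Tendsto (fun n => uSeq β w (k * n + d)) atTop
      (nhds (zf ((d : ℕ) : Fin k))) := by
    intro d
    have hwd : Tendsto (fun n => w (k * n + d)) atTop (nhds (wbar ((d : ℕ) : Fin k))) := by
      have h1 : Tendsto (fun n => w (k * (n + d / k) + ((((d : ℕ) : Fin k)) : ℕ))) atTop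
          (nhds (wbar ((d : ℕ) : Fin k))) :=
        (hconv ((d : ℕ) : Fin k)).comp (tendsto_add_atTop_nat (d / k))
      refine Tendsto.congr (fun n => congrArg w ?_) h1
      rw [Fin.val_natCast, Nat.mul_add, add_assoc, Nat.div_add_mod]
    have hnum : (fun n => uSeq β w (k * n + d))
        = fun n => (1 - β (((d : ℕ) : Fin k) + 1)) / w (k * n + d) := by
      funext n; unfold uSeq
      congr 3
      push_cast
      simp [Fin.natCast_self]
    rw [hnum, hzf]
    exact Tendsto.div tendsto_const_nhds hwd (ne_of_gt (hwbar _))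
  have hunn : ∀ m, 0 ≤ uSeq β w m := uSeq_nonneg hβ hwpos
  obtain ⟨D, hD, M, hDb⟩ := window_geom_bound hzfpos hunn hzb hzbk hη0 hsθ hU
  intro i
  obtain ⟨G3, hG3, hCCle⟩ := CCascending_bound hzfpos hzb hzbk i
  have hNge : ∀ n : ℕ, n ≤ k * n + (i : ℕ) :=
    fun n => le_trans (Nat.le_mul_of_pos_left n hk) (Nat.le_add_right _ _)
  have hNtop : Tendsto (fun n => k * n + (i : ℕ)) atTop atTop :=
    tendsto_atTop_mono hNge tendsto_id
  have hclim : ∀ j, Tendsto (fun n => cCoef β w (k * n + (i : ℕ)) j) atTop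
      (nhds (CCascending zf i j)) := fun j => window_tendsto hU i j
  have hCnn : ∀ j, 0 ≤ CCascending zf i j := CCascending_nonneg hzfpos i
  have hcnn : ∀ N j : ℕ, 0 ≤ cCoef β w N j := cCoef_nonneg hβ hwpos
  have hCle : ∀ j, CCascending zf i j * η ^ j ≤ G3 * θ ^ j := by
    intro j
    calc CCascending zf i j * η ^ j ≤ (G3 * zbar ^ j) * η ^ j :=
          mul_le_mul_of_nonneg_right (hCCle j) (pow_nonneg hη0.le j)
      _ = G3 * (zbar * η) ^ j := by rw [mul_pow]; ring
      _ ≤ G3 * θ ^ j := by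
          refine mul_le_mul_of_nonneg_left (pow_le_pow_left₀ hs0.le hsθ.le j) hG3.le
  have habs_sub : ∀ x y : ℝ, 0 ≤ x → 0 ≤ y → |x - y| ≤ x + y := by
    intro x y hx hy; rw [abs_sub_le_iff]; constructor <;> linarith
  -- the dominating error sequence
  set Efun : ℕ → ℝ := fun n =>
    (∑ j ∈ Finset.range (k * n + (i : ℕ)),
        |cCoef β w (k * n + (i : ℕ)) j - CCascending zf i j| * η ^ j)
      + cCoef β w (k * n + (i : ℕ)) (k * n + (i : ℕ)) * η ^ (k * n + (i : ℕ))
      + G3 * θ ^ (k * n + (i : ℕ)) / (1 - θ) with hEdef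
  -- summability of the limit coefficients
  have hsumgeo : Summable (fun j : ℕ => G3 * θ ^ j) :=
    (summable_geometric_of_lt_one hθ0.le hθ1).mul_left G3
  -- key per-set bound
  have hbound : ∀ n : ℕ, ∀ A : Set ℝ, MeasurableSet A → A ⊆ Set.Icc 0 η →
      |((p (k * n + (i : ℕ))) A).toReal - ((nuMeas k β q zf zbar i) A).toReal| ≤ Efun n := by
    intro n A hA hAsub
    set N := k * n + (i : ℕ) with hNdef
    set T : ℕ → ENNReal := fun j => ∫⁻ x in A, ENNReal.ofReal (x ^ j * β (i - ((j : ℕ) : Fin k)))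
        ∂ q (i - ((j : ℕ) : Fin k)) with hTdef
    have hTle : ∀ j, T j ≤ ENNReal.ofReal (η ^ j) := by
      intro j
      have hpt : ∀ x ∈ A, ENNReal.ofReal (x ^ j * β (i - ((j : ℕ) : Fin k)))
          ≤ ENNReal.ofReal (η ^ j) := by
        intro x hx
        obtain ⟨hx0, hxη⟩ := hAsub hx
        refine ENNReal.ofReal_le_ofReal ?_
        have h1 : x ^ j ≤ η ^ j := pow_le_pow_left₀ hx0 hxη j
        have h2 := (hβ (i - ((j : ℕ) : Fin k))).2.le
        have h3 := (hβ (i - ((j : ℕ) : Fin k))).1.le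
        calc x ^ j * β (i - ((j : ℕ) : Fin k)) ≤ η ^ j * 1 := by
              refine mul_le_mul h1 h2 h3 (by positivity)
          _ = η ^ j := mul_one _
      calc T j ≤ ∫⁻ _ in A, ENNReal.ofReal (η ^ j) ∂ q (i - ((j : ℕ) : Fin k)) :=
            setLIntegral_mono (by fun_prop) hpt
        _ = ENNReal.ofReal (η ^ j) * q (i - ((j : ℕ) : Fin k)) A := by
            rw [setLIntegral_const]
        _ ≤ ENNReal.ofReal (η ^ j) * 1 := by
            exact mul_le_mul_right prob_le_one _
        _ = ENNReal.ofReal (η ^ j) := mul_one _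
    have hTne : ∀ j, T j ≠ ⊤ := fun j => ne_top_of_le_ne_top ENNReal.ofReal_ne_top (hTle j)
    have htr_le : ∀ j, (T j).toReal ≤ η ^ j := fun j =>
      ENNReal.toReal_le_of_le_ofReal (by positivity) (hTle j)
    set R : ENNReal := ∫⁻ x in A, ENNReal.ofReal (x ^ N) ∂ (p 0) with hRdef
    have hRle : R ≤ ENNReal.ofReal (η ^ N) := by
      have hpt : ∀ x ∈ A, ENNReal.ofReal (x ^ N) ≤ ENNReal.ofReal (η ^ N) := by
        intro x hx
        obtain ⟨hx0, hxη⟩ := hAsub hx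
        exact ENNReal.ofReal_le_ofReal (pow_le_pow_left₀ hx0 hxη N)
      calc R ≤ ∫⁻ _ in A, ENNReal.ofReal (η ^ N) ∂ (p 0) := setLIntegral_mono (by fun_prop) hpt
        _ = ENNReal.ofReal (η ^ N) * p 0 A := by rw [setLIntegral_const]
        _ ≤ ENNReal.ofReal (η ^ N) * 1 := by
            refine mul_le_mul_right ?_ _
            rw [← hp0mass]; exact measure_mono (Set.subset_univ A)
        _ = ENNReal.ofReal (η ^ N) := mul_one _
    have hRne : R ≠ ⊤ := ne_top_of_le_ne_top ENNReal.ofReal_ne_top hRle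
    have hrr_le : R.toReal ≤ η ^ N :=
      ENNReal.toReal_le_of_le_ofReal (by positivity) hRle
    -- real-valued expansions
    have hPreal : ((p N) A).toReal
        = (∑ j ∈ Finset.range N, cCoef β w N j * (T j).toReal) + cCoef β w N N * R.toReal := by
      rw [hNdef, pN_apply_eq hβ hq hp01 hwpos hstep i n hA]
      rw [ENNReal.toReal_add ?fin1 ?fin2]
      case fin1 =>
        exact (ENNReal.sum_lt_top.mpr fun j _ => ENNReal.mul_lt_top
          ENNReal.ofReal_lt_top (lt_of_le_of_lt (hTle j) ENNReal.ofReal_lt_top)).ne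
      case fin2 =>
        exact (ENNReal.mul_lt_top ENNReal.ofReal_lt_top (lt_of_le_of_lt hRle
          ENNReal.ofReal_lt_top)).ne
      rw [ENNReal.toReal_sum (fun j _ => (ENNReal.mul_lt_top ENNReal.ofReal_lt_top
        (lt_of_le_of_lt (hTle j) ENNReal.ofReal_lt_top)).ne)]
      congr 1
      · refine Finset.sum_congr rfl fun j _ => ?_
        rw [ENNReal.toReal_mul, ENNReal.toReal_ofReal (hcnn _ j)]
      · rw [ENNReal.toReal_mul, ENNReal.toReal_ofReal (hcnn _ _)]
    have hsumC : Summable (fun j => CCascending zf i j * (T j).toReal) := by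
      refine Summable.of_nonneg_of_le (fun j => ?_) (fun j => ?_) hsumgeo
      · exact mul_nonneg (hCnn j) ENNReal.toReal_nonneg
      · calc CCascending zf i j * (T j).toReal ≤ CCascending zf i j * η ^ j :=
              mul_le_mul_of_nonneg_left (htr_le j) (hCnn j)
          _ ≤ G3 * θ ^ j := hCle j
    have hπreal : ((nuMeas k β q zf zbar i) A).toReal
        = ∑' j : ℕ, CCascending zf i j * (T j).toReal := by
      rw [nuMeas_apply_eq β q zf zbar i hβ hzfpos hzb hzbk hη0.le hs1 hA hAsub]
      rw [ENNReal.tsum_toReal_eq (fun j => (ENNReal.mul_lt_top ENNReal.ofReal_lt_top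
        (lt_of_le_of_lt (hTle j) ENNReal.ofReal_lt_top)).ne)]
      refine tsum_congr fun j => ?_
      rw [ENNReal.toReal_mul, ENNReal.toReal_ofReal (hCnn j)]
    -- the estimate
    have hsplitsum : ∑' j : ℕ, CCascending zf i j * (T j).toReal
        = (∑ j ∈ Finset.range N, CCascending zf i j * (T j).toReal)
          + ∑' m : ℕ, CCascending zf i (m + N) * (T (m + N)).toReal :=
      (hsumC.sum_add_tsum_nat_add N).symm
    have hsumCtail : Summable (fun m => CCascending zf i (m + N) * (T (m + N)).toReal) :=
      (summable_nat_add_iff N).mpr hsumC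
    have htail_le : ∑' m : ℕ, CCascending zf i (m + N) * (T (m + N)).toReal
        ≤ G3 * θ ^ N / (1 - θ) := by
      have hterm : ∀ m : ℕ, CCascending zf i (m + N) * (T (m + N)).toReal
          ≤ (G3 * θ ^ N) * θ ^ m := by
        intro m
        calc CCascending zf i (m + N) * (T (m + N)).toReal
            ≤ CCascending zf i (m + N) * η ^ (m + N) :=
              mul_le_mul_of_nonneg_left (htr_le _) (hCnn _)
          _ ≤ G3 * θ ^ (m + N) := hCle _
          _ = (G3 * θ ^ N) * θ ^ m := by rw [pow_add]; ring
      calc ∑' m : ℕ, CCascending zf i (m + N) * (T (m + N)).toReal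
          ≤ ∑' m : ℕ, (G3 * θ ^ N) * θ ^ m := by
            refine Summable.tsum_le_tsum hterm hsumCtail ?_
            exact (summable_geometric_of_lt_one hθ0.le hθ1).mul_left _
        _ = (G3 * θ ^ N) * (1 - θ)⁻¹ := by
            rw [tsum_mul_left, tsum_geometric_of_lt_one hθ0.le hθ1]
        _ = G3 * θ ^ N / (1 - θ) := by rw [div_eq_mul_inv]
    have htail_nn : 0 ≤ ∑' m : ℕ, CCascending zf i (m + N) * (T (m + N)).toReal :=
      tsum_nonneg fun m => mul_nonneg (hCnn _) ENNReal.toReal_nonneg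
    rw [hPreal, hπreal, hsplitsum]
    have hX : |∑ j ∈ Finset.range N, (cCoef β w N j * (T j).toReal
        - CCascending zf i j * (T j).toReal)|
        ≤ ∑ j ∈ Finset.range N, |cCoef β w N j - CCascending zf i j| * η ^ j := by
      refine le_trans (Finset.abs_sum_le_sum_abs _ _) (Finset.sum_le_sum fun j _ => ?_)
      rw [show cCoef β w N j * (T j).toReal - CCascending zf i j * (T j).toReal
          = (cCoef β w N j - CCascending zf i j) * (T j).toReal from by ring, abs_mul,
        abs_of_nonneg ENNReal.toReal_nonneg]
      exact mul_le_mul_of_nonneg_left (htr_le j) (abs_nonneg _)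
    calc |(∑ j ∈ Finset.range N, cCoef β w N j * (T j).toReal) + cCoef β w N N * R.toReal
          - ((∑ j ∈ Finset.range N, CCascending zf i j * (T j).toReal)
            + ∑' m : ℕ, CCascending zf i (m + N) * (T (m + N)).toReal)|
        = |(∑ j ∈ Finset.range N, (cCoef β w N j * (T j).toReal
            - CCascending zf i j * (T j).toReal))
            + (cCoef β w N N * R.toReal
              - ∑' m : ℕ, CCascending zf i (m + N) * (T (m + N)).toReal)| := by
          rw [Finset.sum_sub_distrib]
          congr 1
          ring
      _ ≤ |∑ j ∈ Finset.range N, (cCoef β w N j * (T j).toReal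
            - CCascending zf i j * (T j).toReal)|
          + |cCoef β w N N * R.toReal
              - ∑' m : ℕ, CCascending zf i (m + N) * (T (m + N)).toReal| := abs_add_le _ _
      _ ≤ (∑ j ∈ Finset.range N, |cCoef β w N j - CCascending zf i j| * η ^ j)
          + (cCoef β w N N * R.toReal
            + ∑' m : ℕ, CCascending zf i (m + N) * (T (m + N)).toReal) := by
          refine add_le_add hX (habs_sub _ _ ?_ htail_nn)
          exact mul_nonneg (hcnn _ _) ENNReal.toReal_nonneg
      _ ≤ (∑ j ∈ Finset.range N, |cCoef β w N j - CCascending zf i j| * η ^ j)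
          + (cCoef β w N N * η ^ N + G3 * θ ^ N / (1 - θ)) := by
          refine add_le_add_right (add_le_add ?_ htail_le) _
          exact mul_le_mul_of_nonneg_left hrr_le (hcnn _ _)
      _ = Efun n := by rw [hEdef, hNdef]; ring
  -- the error sequence tends to 0
  have hE0 : Tendsto Efun atTop (nhds 0) := by
    have hθN : Tendsto (fun n => θ ^ (k * n + (i : ℕ))) atTop (nhds 0) :=
      (tendsto_pow_atTop_nhds_zero_of_lt_one hθ0.le hθ1).comp hNtop
    have hE3 : Tendsto (fun n => G3 * θ ^ (k * n + (i : ℕ)) / (1 - θ)) atTop (nhds 0) := by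
      have := (hθN.const_mul G3).div_const (1 - θ)
      simpa using this
    have hE2 : Tendsto (fun n => cCoef β w (k * n + (i : ℕ)) (k * n + (i : ℕ))
        * η ^ (k * n + (i : ℕ))) atTop (nhds 0) := by
      refine squeeze_zero' ?_ ?_ (by simpa using hθN.const_mul D : Tendsto (fun n => D * θ ^ (k * n + (i : ℕ))) atTop (nhds 0))
      · exact Filter.Eventually.of_forall fun n => mul_nonneg (hcnn _ _) (by positivity)
      · rw [eventually_atTop]
        refine ⟨M, fun n hn => ?_⟩
        have hMN : M ≤ k * n + (i : ℕ) := le_trans hn (hNge n)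
        exact hDb (k * n + (i : ℕ)) (k * n + (i : ℕ)) hMN le_rfl
    have hE1 : Tendsto (fun n => ∑ j ∈ Finset.range (k * n + (i : ℕ)),
        |cCoef β w (k * n + (i : ℕ)) j - CCascending zf i j| * η ^ j) atTop (nhds 0) := by
      set F : ℕ → ℕ → ℝ := fun n j => if j < k * n + (i : ℕ) then
        |cCoef β w (k * n + (i : ℕ)) j - CCascending zf i j| * η ^ j else 0 with hFdef
      have hFeq : ∀ n, ∑ j ∈ Finset.range (k * n + (i : ℕ)),
          |cCoef β w (k * n + (i : ℕ)) j - CCascending zf i j| * η ^ j = ∑' j : ℕ, F n j := by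
        intro n
        rw [tsum_eq_sum (s := Finset.range (k * n + (i : ℕ)))
          (fun j hj => if_neg (fun h => hj (Finset.mem_range.mpr h)))]
        exact Finset.sum_congr rfl fun j hj => (if_pos (Finset.mem_range.mp hj)).symm
      have hdom : Tendsto (fun n => ∑' j : ℕ, F n j) atTop (nhds (∑' _ : ℕ, (0:ℝ))) := by
        refine tendsto_tsum_of_dominated_convergence
          (bound := fun j => (D + G3) * θ ^ j)
          (((summable_geometric_of_lt_one hθ0.le hθ1).mul_left (D + G3))) (fun j => ?_) ?_
        · -- pointwise convergence to 0
          have hptlim : Tendsto (fun n => |cCoef β w (k * n + (i : ℕ)) j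
              - CCascending zf i j| * η ^ j) atTop (nhds 0) := by
            have h1 := (((hclim j).sub_const (CCascending zf i j)).abs).mul_const (η ^ j)
            simpa using h1
          refine Tendsto.congr' ?_ hptlim
          rw [Filter.eventuallyEq_iff_exists_mem]
          refine ⟨Set.Ici (j + 1), Filter.mem_atTop _, fun n hn => ?_⟩
          have : j < k * n + (i : ℕ) := lt_of_lt_of_le (Nat.lt_succ_self j)
            (le_trans hn (hNge n))
          rw [hFdef]
          simp only [this, if_pos]
        · -- domination
          rw [eventually_atTop]
          refine ⟨M, fun n hn j => ?_⟩
          have hMN : M ≤ k * n + (i : ℕ) := le_trans hn (hNge n)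
          rw [hFdef]
          simp only []
          by_cases hj : j < k * n + (i : ℕ)
          · rw [if_pos hj, Real.norm_eq_abs, abs_of_nonneg
              (mul_nonneg (abs_nonneg _) (by positivity))]
            calc |cCoef β w (k * n + (i : ℕ)) j - CCascending zf i j| * η ^ j
                ≤ (cCoef β w (k * n + (i : ℕ)) j + CCascending zf i j) * η ^ j := by
                  refine mul_le_mul_of_nonneg_right
                    (habs_sub _ _ (hcnn _ _) (hCnn _)) (by positivity)
              _ = cCoef β w (k * n + (i : ℕ)) j * η ^ j + CCascending zf i j * η ^ j := by ring
              _ ≤ D * θ ^ j + G3 * θ ^ j := add_le_add (hDb _ j hMN hj.le) (hCle j)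
              _ = (D + G3) * θ ^ j := by ring
          · rw [if_neg hj, norm_zero]
            positivity
      rw [tsum_zero] at hdom
      exact Tendsto.congr (fun n => (hFeq n).symm) hdom
    have := (hE1.add hE2).add hE3
    simpa using this
  -- total variation convergence
  have htv : TVConvOn (fun n => p (k * n + (i : ℕ))) (nuMeas k β q zf zbar i)
      (Set.Icc 0 η) := by
    intro ε hε
    have hev : ∀ᶠ n in atTop, Efun n < ε := hE0.eventually (gt_mem_nhds hε)
    rw [eventually_atTop] at hev
    obtain ⟨N₀, hN₀⟩ := hev
    exact ⟨N₀, fun n hn A hA hAsub =>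
      lt_of_le_of_lt (hbound n A hA hAsub) (hN₀ n hn)⟩
  refine ⟨?_, htv⟩
  -- probability measure
  have hIccmeas : MeasurableSet (Set.Icc (0:ℝ) η) := measurableSet_Icc
  have hpIcc : ∀ m : ℕ, p m (Set.Icc 0 η) = 1 := by
    intro m
    have h1 := measure_add_measure_compl (μ := p m) hIccmeas
    rw [hpnull m, add_zero, hpmass m] at h1
    exact h1
  -- finiteness of π on [0, η]
  have hπfin : nuMeas k β q zf zbar i (Set.Icc 0 η) ≠ ⊤ := by
    rw [nuMeas_apply_eq β q zf zbar i hβ hzfpos hzb hzbk hη0.le hs1 hIccmeas le_rfl]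
    have hle : ∀ j : ℕ, ENNReal.ofReal (CCascending zf i j) *
        (∫⁻ x in Set.Icc 0 η, ENNReal.ofReal (x ^ j * β (i - ((j : ℕ) : Fin k)))
          ∂ q (i - ((j : ℕ) : Fin k)))
        ≤ ENNReal.ofReal G3 * ENNReal.ofReal θ ^ j := by
      intro j
      have hTle : (∫⁻ x in Set.Icc 0 η, ENNReal.ofReal (x ^ j * β (i - ((j : ℕ) : Fin k)))
          ∂ q (i - ((j : ℕ) : Fin k))) ≤ ENNReal.ofReal (η ^ j) := by
        have hpt : ∀ x ∈ Set.Icc (0:ℝ) η, ENNReal.ofReal (x ^ j * β (i - ((j : ℕ) : Fin k)))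
            ≤ ENNReal.ofReal (η ^ j) := by
          intro x hx
          refine ENNReal.ofReal_le_ofReal ?_
          have h1 : x ^ j ≤ η ^ j := pow_le_pow_left₀ hx.1 hx.2 j
          have h2 := (hβ (i - ((j : ℕ) : Fin k))).2.le
          have h3 := (hβ (i - ((j : ℕ) : Fin k))).1.le
          calc x ^ j * β (i - ((j : ℕ) : Fin k)) ≤ η ^ j * 1 :=
                mul_le_mul h1 h2 h3 (by positivity)
            _ = η ^ j := mul_one _
        calc (∫⁻ x in Set.Icc 0 η, ENNReal.ofReal (x ^ j * β (i - ((j : ℕ) : Fin k)))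
              ∂ q (i - ((j : ℕ) : Fin k)))
            ≤ ∫⁻ _ in Set.Icc 0 η, ENNReal.ofReal (η ^ j) ∂ q (i - ((j : ℕ) : Fin k)) :=
              setLIntegral_mono (by fun_prop) hpt
          _ = ENNReal.ofReal (η ^ j) * q (i - ((j : ℕ) : Fin k)) (Set.Icc 0 η) := by
              rw [setLIntegral_const]
          _ ≤ ENNReal.ofReal (η ^ j) * 1 := mul_le_mul_right prob_le_one _
          _ = ENNReal.ofReal (η ^ j) := mul_one _
      calc ENNReal.ofReal (CCascending zf i j) * _
          ≤ ENNReal.ofReal (CCascending zf i j) * ENNReal.ofReal (η ^ j) :=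
            mul_le_mul_right hTle _
        _ = ENNReal.ofReal (CCascending zf i j * η ^ j) := by
            rw [ENNReal.ofReal_mul (hCnn j)]
        _ ≤ ENNReal.ofReal (G3 * θ ^ j) := ENNReal.ofReal_le_ofReal (hCle j)
        _ = ENNReal.ofReal G3 * ENNReal.ofReal θ ^ j := by
            rw [ENNReal.ofReal_mul hG3.le, ENNReal.ofReal_pow hθ0.le]
    refine (lt_of_le_of_lt (ENNReal.tsum_le_tsum hle) ?_).ne
    rw [ENNReal.tsum_mul_left, ENNReal.tsum_geometric]
    refine ENNReal.mul_lt_top ENNReal.ofReal_lt_top ?_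
    rw [lt_top_iff_ne_top]
    refine ENNReal.inv_ne_top.mpr ?_
    rw [ne_eq, tsub_eq_zero_iff_le, not_le]
    exact ENNReal.ofReal_lt_one.mpr hθ1
  -- value of π on [0, η]
  have hπ1 : nuMeas k β q zf zbar i (Set.Icc 0 η) = 1 := by
    have habs : ∀ ε : ℝ, 0 < ε →
        |(nuMeas k β q zf zbar i (Set.Icc 0 η)).toReal - 1| < ε := by
      intro ε hε
      obtain ⟨N₀, hN₀⟩ := htv ε hε
      have := hN₀ N₀ le_rfl (Set.Icc 0 η) hIccmeas le_rfl
      rw [hpIcc, ENNReal.toReal_one] at this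
      rw [abs_sub_comm]
      exact this
    have h0 : |(nuMeas k β q zf zbar i (Set.Icc 0 η)).toReal - 1| = 0 := by
      by_contra h
      have hpos : 0 < |(nuMeas k β q zf zbar i (Set.Icc 0 η)).toReal - 1| :=
        lt_of_le_of_ne (abs_nonneg _) (Ne.symm h)
      exact lt_irrefl _ (habs _ hpos)
    have h1 : (nuMeas k β q zf zbar i (Set.Icc 0 η)).toReal = 1 := by
      have := abs_eq_zero.mp h0
      linarith
    rw [← ENNReal.ofReal_toReal hπfin, h1]
    norm_num
  have hcompl : nuMeas k β q zf zbar i (Set.Icc (0:ℝ) η)ᶜ = 0 := by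
    unfold nuMeas
    rw [Measure.coe_finset_sum, Finset.sum_apply]
    refine Finset.sum_eq_zero fun j _ => ?_
    rw [withDensity_apply _ hIccmeas.compl]
    rw [Measure.restrict_eq_zero.mpr (hqnull _), lintegral_zero_measure]
  constructor
  rw [← Set.union_compl_self (Set.Icc (0:ℝ) η),
    measure_union disjoint_compl_right hIccmeas.compl, hπ1, hcompl, add_zero]
end
end

section
/- Let V = (v₀,…,v_{k−1}) be the column vector defined by v_i := z_{k−1} z_{k−2} ⋯ z_i / z̄^{k−i} (so that v₀ = 1). Then there exists a constant α ≥ 0 such that A(z̄) V + α·𝟏 = V, where 𝟏 is the all-ones vector. Furthermore, if z̄ < 1/η₀ then α = 0. -/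
open MeasureTheory Matrix Filter
open Fin.NatCast

noncomputable section

open scoped ENNReal NNReal

namespace S12

def SuppIn (μ : Measure ℝ) (c : ℝ) : Prop := μ (Set.Icc (0:ℝ) c)ᶜ = 0

lemma ae_mem {μ : Measure ℝ} {c : ℝ} (h : SuppIn μ c) : ∀ᵐ x ∂μ, x ∈ Set.Icc (0:ℝ) c :=
  MeasureTheory.mem_ae_iff.2 h

lemma suppIn_mono {μ : Measure ℝ} {c c' : ℝ} (h : SuppIn μ c) (hc : c ≤ c') :
    SuppIn μ c' := measure_mono_null (Set.compl_subset_compl.2 (Set.Icc_subset_Icc le_rfl hc)) h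

lemma integrable_pow {μ : Measure ℝ} [IsFiniteMeasure μ] (h : SuppIn μ 1) (T : ℕ) :
    Integrable (fun x : ℝ => x ^ T) μ := by
  refine (integrable_const (1:ℝ)).mono' (by fun_prop) ?_
  filter_upwards [ae_mem h] with x hx
  rw [Real.norm_eq_abs, abs_pow, abs_of_nonneg hx.1]
  exact pow_le_one₀ hx.1 hx.2

lemma integral_pow_nonneg {μ : Measure ℝ} {c : ℝ} (h : SuppIn μ c) (T : ℕ) :
    0 ≤ ∫ x, x ^ T ∂μ := by
  refine integral_nonneg_of_ae ?_
  filter_upwards [ae_mem h] with x hx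
  exact pow_nonneg hx.1 T

lemma integral_pow_le_one {μ : Measure ℝ} [IsProbabilityMeasure μ] (h : SuppIn μ 1) (T : ℕ) :
    ∫ x, x ^ T ∂μ ≤ 1 := by
  calc ∫ x, x ^ T ∂μ ≤ ∫ _x, (1:ℝ) ∂μ := by
        refine integral_mono_ae (integrable_pow h T) (integrable_const 1) ?_
        filter_upwards [ae_mem h] with x hx
        exact pow_le_one₀ hx.1 hx.2
    _ = 1 := by simp

lemma integral_pow_succ_le {μ : Measure ℝ} [IsFiniteMeasure μ] {c : ℝ}
    (h : SuppIn μ c) (hc0 : 0 ≤ c) (hc1 : c ≤ 1) (T : ℕ) :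
    ∫ x, x ^ (T+1) ∂μ ≤ c * ∫ x, x ^ T ∂μ := by
  have h1 : SuppIn μ 1 := suppIn_mono h hc1
  rw [← integral_const_mul]
  refine integral_mono_ae (integrable_pow h1 (T+1)) ((integrable_pow h1 T).const_mul c) ?_
  filter_upwards [ae_mem h] with x hx
  calc x ^ (T+1) = x * x ^ T := by ring
    _ ≤ c * x ^ T := mul_le_mul_of_nonneg_right hx.2 (pow_nonneg hx.1 T)

lemma integral_pow_succ_ge {μ : Measure ℝ} [IsProbabilityMeasure μ] {c : ℝ}
    (h : SuppIn μ 1) (hc0 : 0 ≤ c) (hc1 : c ≤ 1) (T : ℕ) :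
    c * (∫ x, x ^ T ∂μ) - c ^ (T+1) ≤ ∫ x, x ^ (T+1) ∂μ := by
  have key : ∫ x, c * x ^ T ∂μ ≤ ∫ x, (x ^ (T+1) + c ^ (T+1)) ∂μ := by
    refine integral_mono_ae ((integrable_pow h T).const_mul c)
      ((integrable_pow h (T+1)).add (integrable_const _)) ?_
    filter_upwards [ae_mem h] with x hx
    rcases le_total c x with hcx | hxc
    · have : c * x ^ T ≤ x ^ (T+1) := by
        calc c * x ^ T ≤ x * x ^ T := mul_le_mul_of_nonneg_right hcx (pow_nonneg hx.1 T)
          _ = x ^ (T+1) := by ring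
      nlinarith [pow_nonneg hc0 (T+1)]
    · have : c * x ^ T ≤ c ^ (T+1) := by
        calc c * x ^ T ≤ c * c ^ T :=
              mul_le_mul_of_nonneg_left (pow_le_pow_left₀ hx.1 hxc T) hc0
          _ = c ^ (T+1) := by ring
      nlinarith [pow_nonneg hx.1 (T+1)]
  rw [integral_const_mul] at key
  rw [integral_add (integrable_pow h (T+1)) (integrable_const _)] at key
  simp only [integral_const, measure_univ, probReal_univ, ENNReal.toReal_one, smul_eq_mul, one_mul] at key
  linarith

lemma integral_pow_ge_meas {μ : Measure ℝ} [IsFiniteMeasure μ] {c : ℝ}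
    (h : SuppIn μ 1) (hc0 : 0 ≤ c) (T : ℕ) :
    c ^ T * (μ (Set.Icc c 1)).toReal ≤ ∫ x, x ^ T ∂μ := by
  have : ∫ x, Set.indicator (Set.Icc c 1) (fun _ => c ^ T) x ∂μ ≤ ∫ x, x ^ T ∂μ := by
    refine integral_mono_ae ((integrable_const _).indicator measurableSet_Icc)
      (integrable_pow h T) ?_
    filter_upwards [ae_mem h] with x hx
    by_cases hxm : x ∈ Set.Icc c 1
    · rw [Set.indicator_of_mem hxm]; exact pow_le_pow_left₀ hc0 hxm.1 T
    · rw [Set.indicator_of_notMem hxm]; exact pow_nonneg hx.1 T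
  rwa [integral_indicator_const _ measurableSet_Icc, smul_eq_mul, mul_comm] at this

/-- One step of the Kingman recursion. -/
lemma step {ν Q : Measure ℝ} [IsProbabilityMeasure ν] [IsProbabilityMeasure Q]
    {η b wn : ℝ} (hν : SuppIn ν η) (hQ : SuppIn Q η) (hη1 : η ≤ 1)
    (hb : b ∈ Set.Ioo (0:ℝ) 1) (hwn : wn = ∫ x, x ∂ν) (hw : 0 < wn) :
    IsProbabilityMeasure (ENNReal.ofReal b • Q
        + ν.withDensity fun x => ENNReal.ofReal ((1 - b) * x / wn))
    ∧ SuppIn (ENNReal.ofReal b • Q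
        + ν.withDensity fun x => ENNReal.ofReal ((1 - b) * x / wn)) η
    ∧ ∀ T : ℕ, (∫ x, x ^ T ∂(ENNReal.ofReal b • Q
        + ν.withDensity fun x => ENNReal.ofReal ((1 - b) * x / wn)))
      = b * (∫ x, x ^ T ∂Q) + ((1 - b)/wn) * ∫ x, x ^ (T+1) ∂ν := by
  have hν1 : SuppIn ν 1 := suppIn_mono hν hη1
  have hQ1 : SuppIn Q 1 := suppIn_mono hQ hη1
  set g : ℝ → ℝ := fun x => (1 - b) * x / wn with hg
  have hgm : Measurable fun x => (g x).toNNReal := by fun_prop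
  have hofReal : (fun x => ENNReal.ofReal (g x)) = fun x => ((g x).toNNReal : ℝ≥0∞) := rfl
  set W : Measure ℝ := ν.withDensity fun x => ENNReal.ofReal (g x) with hW
  have hWint : ∀ T : ℕ, ∫ x, x ^ T ∂W = ((1 - b)/wn) * ∫ x, x ^ (T+1) ∂ν := by
    intro T
    rw [hW, hofReal, integral_withDensity_eq_integral_smul hgm]
    have : ∫ x, (g x).toNNReal • x ^ T ∂ν = ∫ x, ((1 - b)/wn) * x ^ (T+1) ∂ν := by
      refine integral_congr_ae ?_
      filter_upwards [ae_mem hν1] with x hx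
      have hgx : 0 ≤ g x := div_nonneg (mul_nonneg (by linarith [hb.2]) hx.1) hw.le
      rw [NNReal.smul_def, Real.coe_toNNReal _ hgx, smul_eq_mul, hg]
      field_simp; ring
    rw [this, integral_const_mul]
  have hxint : Integrable (fun x : ℝ => x) ν := by simpa using integrable_pow hν1 1
  have hlx : ∫⁻ x, ENNReal.ofReal x ∂ν = ENNReal.ofReal wn := by
    rw [hwn, ← ofReal_integral_eq_lintegral_ofReal hxint]
    filter_upwards [ae_mem hν1] with x hx using hx.1
  have hWuniv : W Set.univ = ENNReal.ofReal (1 - b) := by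
    rw [hW, withDensity_apply _ MeasurableSet.univ, setLIntegral_univ]
    have : ∀ᵐ x ∂ν, ENNReal.ofReal (g x) = ENNReal.ofReal ((1-b)/wn) * ENNReal.ofReal x := by
      filter_upwards [ae_mem hν1] with x hx
      rw [← ENNReal.ofReal_mul (div_nonneg (by linarith [hb.2]) hw.le)]
      congr 1; rw [hg]; field_simp
    rw [lintegral_congr_ae this, lintegral_const_mul' _ _ ENNReal.ofReal_ne_top, hlx,
      ← ENNReal.ofReal_mul (div_nonneg (by linarith [hb.2]) hw.le)]
    congr 1; field_simp
  have hWfin : IsFiniteMeasure W := by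
    constructor; rw [hWuniv]; exact ENNReal.ofReal_lt_top
  have hWsupp : SuppIn W η := by
    rw [SuppIn, hW, withDensity_apply _ measurableSet_Icc.compl]
    rw [setLIntegral_measure_zero _ _ hν]
  have hprob : IsProbabilityMeasure (ENNReal.ofReal b • Q + W) := by
    constructor
    rw [Measure.add_apply, Measure.smul_apply, smul_eq_mul, measure_univ, mul_one, hWuniv,
      ← ENNReal.ofReal_add (le_of_lt hb.1) (by linarith [hb.2])]
    norm_num
  refine ⟨hprob, ?_, ?_⟩
  · rw [SuppIn, Measure.add_apply, Measure.smul_apply, hQ, hWsupp, smul_zero, add_zero]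
  · intro T
    have hQi : Integrable (fun x : ℝ => x ^ T) (ENNReal.ofReal b • Q) :=
      (integrable_pow hQ1 T).smul_measure ENNReal.ofReal_ne_top
    have hWi : Integrable (fun x : ℝ => x ^ T) W :=
      integrable_pow (suppIn_mono hWsupp hη1) T
    rw [integral_add_measure hQi hWi, integral_smul_measure, hWint T,
      ENNReal.toReal_ofReal (le_of_lt hb.1), smul_eq_mul]

/-- Bundled context. -/
structure Ctx (k : ℕ) [NeZero k] where
  β : Fin k → ℝ
  q : Fin k → Measure ℝ
  p : ℕ → Measure ℝ
  w : ℕ → ℝ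
  η : ℝ
  wbar : Fin k → ℝ
  hβ : ∀ i, β i ∈ Set.Ioo (0:ℝ) 1
  hqprob : ∀ i, IsProbabilityMeasure (q i)
  hqS : ∀ i, SuppIn (q i) η
  hqmass : ∀ i, ∃ c > 0, 0 < (q i) (Set.Icc c 1)
  hη0 : 0 ≤ η
  hη1 : η ≤ 1
  hw : ∀ n, w n = ∫ x, x ∂ p n
  hrec : ∀ n : ℕ, p (n + 1) = ENNReal.ofReal (β ((n + 1 : ℕ) : Fin k)) • q ((n + 1 : ℕ) : Fin k)
    + (p n).withDensity fun x => ENNReal.ofReal ((1 - β ((n + 1 : ℕ) : Fin k)) * x / w n)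
  hpprob : ∀ n, IsProbabilityMeasure (p n)
  hpS : ∀ n, SuppIn (p n) η
  hwpos : ∀ n, 0 < w n
  hconv : ∀ i : Fin k, Tendsto (fun n => w (k * n + (i : ℕ))) atTop (nhds (wbar i))

namespace Ctx
variable {k : ℕ} [NeZero k] (S : Ctx k)

lemma hqS1 (i : Fin k) : SuppIn (S.q i) 1 := suppIn_mono (S.hqS i) S.hη1
lemma hpS1 (n : ℕ) : SuppIn (S.p n) 1 := suppIn_mono (S.hpS n) S.hη1

/-- the step integral identity in context -/
lemma step_integral (n T : ℕ) :
    ∫ x, x ^ T ∂ S.p (n+1) = S.β ((n+1 : ℕ) : Fin k) * (∫ x, x ^ T ∂ S.q ((n+1:ℕ) : Fin k))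
      + ((1 - S.β ((n+1:ℕ) : Fin k))/ S.w n) * ∫ x, x ^ (T+1) ∂ S.p n := by
  haveI := S.hpprob n; haveI := S.hqprob ((n+1:ℕ) : Fin k)
  rw [S.hrec n]
  exact (step (S.hpS n) (S.hqS _) S.hη1 (S.hβ _) (S.hw n) (S.hwpos n)).2.2 T

def zeta (M : ℕ) : ℝ := (1 - S.β ((M + 1 : ℕ) : Fin k)) / S.w M

lemma zeta_pos (M : ℕ) : 0 < S.zeta M :=
  div_pos (by linarith [(S.hβ ((M+1:ℕ):Fin k)).2]) (S.hwpos M)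

def Fse (N T : ℕ) : ℝ :=
  (∏ r ∈ Finset.Ico (N - T) N, S.zeta r) * ∫ x, x ^ T ∂ S.p (N - T)

def termS (N t : ℕ) : ℝ :=
  (∏ r ∈ Finset.Ico (N - t) N, S.zeta r) *
    (S.β ((N - t : ℕ) : Fin k) * ∫ x, x ^ t ∂ S.q ((N - t : ℕ) : Fin k))

lemma Fse_nonneg (N T : ℕ) : 0 ≤ S.Fse N T :=
  mul_nonneg (Finset.prod_nonneg fun r _ => (S.zeta_pos r).le)
    (integral_pow_nonneg (S.hpS _) T)

lemma termS_nonneg (N t : ℕ) : 0 ≤ S.termS N t :=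
  mul_nonneg (Finset.prod_nonneg fun r _ => (S.zeta_pos r).le)
    (mul_nonneg (S.hβ _).1.le (integral_pow_nonneg (S.hqS _) t))

lemma Fse_zero (N : ℕ) : S.Fse N 0 = 1 := by
  haveI := S.hpprob N
  simp [Fse]

lemma Fse_succ (N T : ℕ) (h : T < N) : S.Fse N T = S.termS N T + S.Fse N (T+1) := by
  have h1 : N - T - 1 = N - (T+1) := by omega
  have h2 : (N - (T+1)) + 1 = N - T := by omega
  have key := S.step_integral (N - (T+1)) T
  rw [h2] at key
  have hprod : ∏ r ∈ Finset.Ico (N - (T+1)) N, S.zeta r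
      = S.zeta (N - (T+1)) * ∏ r ∈ Finset.Ico (N - T) N, S.zeta r := by
    have h3 : N - (T+1) + 1 = N - T := by omega
    rw [Finset.prod_eq_prod_Ico_succ_bot (show N - (T+1) < N by omega) S.zeta, h3]
  rw [Fse, Fse, termS, key, hprod]
  have hz : S.zeta (N - (T+1)) = (1 - S.β ((N - T : ℕ) : Fin k)) / S.w (N - (T+1)) := by
    rw [zeta, h2]
  rw [hz]
  ring

lemma identity (N T : ℕ) (h : T ≤ N) :
    (1:ℝ) = (∑ t ∈ Finset.range T, S.termS N t) + S.Fse N T := by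
  induction T with
  | zero => simp [S.Fse_zero N]
  | succ T ih =>
      rw [Finset.sum_range_succ]
      have := S.Fse_succ N T (by omega)
      rw [ih (by omega), this]
      ring

end Ctx

section Helpers
variable {k : ℕ} [NeZero k]

lemma kpos : 0 < k := Nat.pos_of_ne_zero (NeZero.ne k)

lemma natCast_congr {a b : ℕ} (h : a % k = b % k) : ((a : ℕ) : Fin k) = ((b : ℕ) : Fin k) :=
  Fin.ext (by rw [Fin.val_natCast, Fin.val_natCast, h])

lemma natCast_add_k (a : ℕ) : ((a + k : ℕ) : Fin k) = ((a : ℕ) : Fin k) :=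
  natCast_congr (Nat.add_mod_right a k)

lemma natCast_kmul_add (n j : ℕ) : ((k * n + j : ℕ) : Fin k) = ((j : ℕ) : Fin k) :=
  natCast_congr (by rw [Nat.mul_add_mod])

lemma tendsto_div_const_atTop : Tendsto (fun T : ℕ => T / k) atTop atTop := by
  refine Filter.tendsto_atTop.2 fun b => Filter.eventually_atTop.2 ⟨k * b, fun T hT => ?_⟩
  exact (Nat.le_div_iff_mul_le (kpos (k := k))).2 (by rw [mul_comm]; exact hT)

lemma no_growth {g : ℕ → ℝ} (hpos : ∀ n, 0 < g n) (hb : ∀ n, g n ≤ 1) {ρ : ℝ}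
    (hr : Tendsto (fun n => g (n + 1) / g n) atTop (nhds ρ)) : ρ ≤ 1 := by
  by_contra hlt
  push_neg at hlt
  set ρ' := (1 + ρ) / 2 with hρ'
  have hρ'1 : 1 < ρ' := by rw [hρ']; linarith
  have hev : ∀ᶠ n in atTop, ρ' < g (n + 1) / g n :=
    hr.eventually (eventually_gt_nhds (by rw [hρ']; linarith))
  obtain ⟨N₀, hN₀⟩ := Filter.eventually_atTop.1 hev
  have hstep : ∀ m : ℕ, ρ' ^ m * g N₀ ≤ g (N₀ + m) := by
    intro m
    induction m with
    | zero => simp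
    | succ m ih =>
        have h1 := hN₀ (N₀ + m) (by omega)
        have h2 : ρ' * g (N₀ + m) ≤ g (N₀ + m + 1) := by
          rw [lt_div_iff₀ (hpos (N₀ + m))] at h1
          linarith
        calc ρ' ^ (m+1) * g N₀ = ρ' * (ρ' ^ m * g N₀) := by ring
          _ ≤ ρ' * g (N₀ + m) := by
              exact mul_le_mul_of_nonneg_left ih (by linarith)
          _ ≤ g (N₀ + m + 1) := h2
        
  obtain ⟨m, hm⟩ := pow_unbounded_of_one_lt (1 / g N₀) hρ'1
  have := hstep m
  have hpN := hpos N₀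
  rw [div_lt_iff₀ hpN] at hm
  have := hb (N₀ + m)
  nlinarith

end Helpers

namespace Ctx
variable {k : ℕ} [NeZero k] (S : Ctx k)

/-- uniform positive lower bound for `w n`, `n ≥ 1`. -/
lemma wlow : ∃ c > 0, ∀ n, 1 ≤ n → c ≤ S.w n := by
  classical
  haveI : Nonempty (Fin k) := ⟨⟨0, kpos⟩⟩
  set L : Fin k → ℝ := fun j => S.β j * ∫ x, x ^ 1 ∂ S.q j with hL
  have hLpos : ∀ j, 0 < L j := by
    intro j
    obtain ⟨c, hc, hmass⟩ := S.hqmass j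
    haveI := S.hqprob j
    have h1 : c ^ 1 * ((S.q j) (Set.Icc c 1)).toReal ≤ ∫ x, x ^ 1 ∂ S.q j :=
      integral_pow_ge_meas (S.hqS1 j) hc.le 1
    have h2 : 0 < ((S.q j) (Set.Icc c 1)).toReal :=
      ENNReal.toReal_pos hmass.ne' (measure_ne_top _ _)
    exact mul_pos (S.hβ j).1 (lt_of_lt_of_le (by nlinarith) h1)
  refine ⟨Finset.univ.inf' Finset.univ_nonempty L, ?_, ?_⟩
  · exact (Finset.lt_inf'_iff _).2 fun j _ => hLpos j
  · intro n hn
    obtain ⟨m, rfl⟩ : ∃ m, n = m + 1 := ⟨n - 1, by omega⟩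
    have key := S.step_integral m 1
    have : S.w (m + 1) = ∫ x, x ^ 1 ∂ S.p (m+1) := by
      rw [S.hw (m+1)]; simp
    rw [this, key]
    have h2 : 0 ≤ ((1 - S.β ((m+1:ℕ) : Fin k)) / S.w m) * ∫ x, x ^ (1+1) ∂ S.p m := by
      apply mul_nonneg (div_nonneg (by linarith [(S.hβ ((m+1:ℕ):Fin k)).2]) (S.hwpos m).le)
        (integral_pow_nonneg (S.hpS m) 2)
    have h3 : Finset.univ.inf' Finset.univ_nonempty L ≤ L ((m+1:ℕ) : Fin k) :=
      Finset.inf'_le _ (Finset.mem_univ _)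
    rw [hL] at h3
    simp only at h3
    linarith

lemma wbar_pos (i : Fin k) : 0 < S.wbar i := by
  obtain ⟨c, hc, hcle⟩ := S.wlow
  have : c ≤ S.wbar i := by
    refine ge_of_tendsto (S.hconv i) ?_
    filter_upwards [Filter.eventually_ge_atTop 1] with n hn
    exact hcle _ (by have h2 : 1*1 ≤ k*n := Nat.mul_le_mul (kpos (k:=k)) hn; omega)
  linarith

def zLim (j : ℕ) : ℝ := (1 - S.β ((j : Fin k) + 1)) / S.wbar ((j : Fin k))

lemma zLim_pos (j : ℕ) : 0 < S.zLim j :=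
  div_pos (by linarith [(S.hβ ((j : Fin k) + 1)).2]) (S.wbar_pos _)

lemma zLim_congr {a b : ℕ} (h : a % k = b % k) : S.zLim a = S.zLim b := by
  unfold zLim; rw [natCast_congr h]

/-- convergence of `ζ` along residue classes -/
lemma zeta_conv (j : ℕ) :
    Tendsto (fun n => S.zeta (k * n + j)) atTop (nhds (S.zLim j)) := by
  have hwconv : Tendsto (fun n => S.w (k * n + j)) atTop (nhds (S.wbar ((j:ℕ) : Fin k))) := by
    have h1 := (S.hconv ((j : ℕ) : Fin k)).comp (tendsto_add_atTop_nat (j / k))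
    have heq : (fun n => S.w (k * n + (((j:ℕ) : Fin k) : ℕ))) ∘ (fun n => n + j / k)
        = fun n => S.w (k * n + j) := by
      funext n
      simp only [Function.comp_apply]
      congr 1
      rw [Fin.val_natCast]
      have := Nat.div_add_mod j k
      have hk := kpos (k := k)
      ring_nf
      omega
    rwa [heq] at h1
  have heq2 : (fun n => S.zeta (k * n + j))
      = fun n => (1 - S.β ((j : Fin k) + 1)) / S.w (k * n + j) := by
    funext n
    rw [Ctx.zeta]
    congr 2
    have : ((k * n + j + 1 : ℕ) : Fin k) = ((j + 1 : ℕ) : Fin k) := by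
      rw [add_assoc]
      exact natCast_kmul_add n (j+1)
    rw [this]
    push_cast
    ring
  rw [heq2, zLim]
  exact Tendsto.div tendsto_const_nhds hwconv (S.wbar_pos _).ne'

def ctk (i t : ℕ) : Fin k := ((k * t + i - t : ℕ) : Fin k)

def Qp (i t : ℕ) : ℝ := ∏ s ∈ Finset.range t, S.zLim (k * t + i + s - t)

def bqv (i t : ℕ) : ℝ := S.β (ctk (k := k) i t) * ∫ x, x ^ t ∂ S.q (ctk (k := k) i t)

def LLv (i T : ℕ) : ℝ := 1 - ∑ t ∈ Finset.range T, S.Qp i t * S.bqv i t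

lemma Qp_nonneg (i t : ℕ) : 0 ≤ S.Qp i t :=
  Finset.prod_nonneg fun s _ => (S.zLim_pos _).le

lemma bqv_nonneg (i t : ℕ) : 0 ≤ S.bqv i t :=
  mul_nonneg (S.hβ _).1.le (integral_pow_nonneg (S.hqS _) t)


lemma prod_conv (i T : ℕ) :
    Tendsto (fun n => ∏ r ∈ Finset.Ico (k*n + i - T) (k*n + i), S.zeta r) atTop
      (nhds (S.Qp i T)) := by
  rw [← Filter.tendsto_add_atTop_iff_nat T]
  have hkT : T ≤ k * T := Nat.le_mul_of_pos_left T (kpos (k := k))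
  have heq : ∀ n, ∏ r ∈ Finset.Ico (k*(n+T) + i - T) (k*(n+T) + i), S.zeta r
      = ∏ s ∈ Finset.range T, S.zeta (k*n + (k*T + i + s - T)) := by
    intro n
    have hdist : k*(n+T) = k*n + k*T := by ring
    rw [Finset.prod_Ico_eq_prod_range]
    have hcount : k*(n+T) + i - (k*(n+T) + i - T) = T := by omega
    rw [hcount]
    refine Finset.prod_congr rfl fun s _ => ?_
    congr 1
    omega
  simp only [heq]
  exact tendsto_finset_prod _ fun s _ => S.zeta_conv (k*T + i + s - T)

lemma termS_conv (i t : ℕ) :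
    Tendsto (fun n => S.termS (k*n + i) t) atTop (nhds (S.Qp i t * S.bqv i t)) := by
  refine Tendsto.congr' ?_ ((S.prod_conv i t).mul_const (S.bqv i t))
  filter_upwards [Filter.eventually_ge_atTop t] with n hn
  have hkt : t ≤ k * t := Nat.le_mul_of_pos_left t (kpos (k := k))
  have hkn : n ≤ k * n := Nat.le_mul_of_pos_left n (kpos (k := k))
  rw [termS, bqv]
  have hidx : ((k*n + i - t : ℕ) : Fin k) = ctk (k := k) i t := by
    refine natCast_congr ?_
    have h1 : k*n + i - t + t*k = k*t + i - t + n*k := by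
      have h2 : k*n = n*k := mul_comm _ _
      have h3 : k*t = t*k := mul_comm _ _
      omega
    calc (k*n + i - t) % k = (k*n + i - t + t*k) % k := (Nat.add_mul_mod_self_right _ _ _).symm
      _ = (k*t + i - t + n*k) % k := by rw [h1]
      _ = (k*t + i - t) % k := Nat.add_mul_mod_self_right _ _ _
  rw [hidx]

lemma Fse_conv (i T : ℕ) :
    Tendsto (fun n => S.Fse (k*n + i) T) atTop (nhds (S.LLv i T)) := by
  have hlim : Tendsto (fun n => 1 - ∑ t ∈ Finset.range T, S.termS (k*n+i) t) atTop
      (nhds (S.LLv i T)) := by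
    rw [LLv]
    exact Tendsto.const_sub _ (tendsto_finset_sum _ fun t _ => S.termS_conv i t)
  refine Tendsto.congr' ?_ hlim
  filter_upwards [Filter.eventually_ge_atTop T] with n hn
  have hkn : n ≤ k * n := Nat.le_mul_of_pos_left n (kpos (k := k))
  have := S.identity (k*n+i) T (by omega)
  linarith

lemma LLv_nonneg (i T : ℕ) : 0 ≤ S.LLv i T :=
  ge_of_tendsto (S.Fse_conv i T) (Filter.Eventually.of_forall fun n => S.Fse_nonneg _ _)

lemma LLv_anti (i : ℕ) : Antitone (fun T => S.LLv i T) := by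
  refine antitone_nat_of_succ_le fun T => ?_
  simp only [LLv, Finset.sum_range_succ]
  have := mul_nonneg (S.Qp_nonneg i T) (S.bqv_nonneg i T)
  linarith

def alphav (i : ℕ) : ℝ := ⨅ T, S.LLv i T

lemma tendsto_alphav (i : ℕ) : Tendsto (fun T => S.LLv i T) atTop (nhds (S.alphav i)) := by
  refine tendsto_atTop_ciInf (S.LLv_anti i) ⟨0, ?_⟩
  rintro x ⟨T, rfl⟩
  exact S.LLv_nonneg i T

lemma alphav_nonneg (i : ℕ) : 0 ≤ S.alphav i :=
  le_ciInf fun T => S.LLv_nonneg i T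

lemma hasSum_Qbq (i : ℕ) : HasSum (fun t => S.Qp i t * S.bqv i t) (1 - S.alphav i) := by
  refine (hasSum_iff_tendsto_nat_of_nonneg
    (fun t => mul_nonneg (S.Qp_nonneg i t) (S.bqv_nonneg i t)) _).2 ?_
  have : (fun T => ∑ t ∈ Finset.range T, S.Qp i t * S.bqv i t)
      = fun T => 1 - S.LLv i T := by
    funext T; rw [LLv]; ring
  rw [this]
  exact (S.tendsto_alphav i).const_sub 1

lemma Qp_add_k (i t : ℕ) : S.Qp (i + k) t = S.Qp i t := by
  have hkt : t ≤ k * t := Nat.le_mul_of_pos_left t (kpos (k := k))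
  refine Finset.prod_congr rfl fun s _ => S.zLim_congr ?_
  have h1 : k*t + (i+k) + s - t = (k*t + i + s - t) + k := by omega
  rw [h1, Nat.add_mod_right]

lemma ctk_add_k (i t : ℕ) : ctk (k := k) (i + k) t = ctk (k := k) i t := by
  have hkt : t ≤ k * t := Nat.le_mul_of_pos_left t (kpos (k := k))
  refine natCast_congr ?_
  have h1 : k*t + (i+k) - t = (k*t + i - t) + k := by omega
  rw [h1, Nat.add_mod_right]

lemma bqv_add_k (i t : ℕ) : S.bqv (i + k) t = S.bqv i t := by
  rw [bqv, bqv, ctk_add_k]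

lemma LLv_add_k (i T : ℕ) : S.LLv (i + k) T = S.LLv i T := by
  unfold LLv
  congr 1
  refine Finset.sum_congr rfl fun t _ => ?_
  rw [S.Qp_add_k, S.bqv_add_k]

lemma alphav_add_k (i : ℕ) : S.alphav (i + k) = S.alphav i := by
  unfold alphav
  congr 1
  funext T
  exact S.LLv_add_k i T

lemma Fse_step_le (N T : ℕ) (h : T ≤ N) :
    S.Fse (N+1) (T+1) ≤ S.zeta N * (S.η * S.Fse N T) := by
  have hsub : (N+1) - (T+1) = N - T := by omega
  haveI := S.hpprob (N - T)
  have hb := integral_pow_succ_le (S.hpS (N - T)) S.hη0 S.hη1 T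
  have hP : (0:ℝ) ≤ ∏ r ∈ Finset.Ico (N-T) N, S.zeta r :=
    Finset.prod_nonneg fun r _ => (S.zeta_pos r).le
  have hz := (S.zeta_pos N).le
  rw [Fse, Fse, hsub, Finset.prod_Ico_succ_top (by omega)]
  calc (∏ r ∈ Finset.Ico (N-T) N, S.zeta r) * S.zeta N * ∫ x, x^(T+1) ∂ S.p (N-T)
      ≤ (∏ r ∈ Finset.Ico (N-T) N, S.zeta r) * S.zeta N * (S.η * ∫ x, x^T ∂ S.p (N-T)) := by
        exact mul_le_mul_of_nonneg_left hb (mul_nonneg hP hz)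
    _ = S.zeta N * (S.η * ((∏ r ∈ Finset.Ico (N-T) N, S.zeta r) * ∫ x, x^T ∂ S.p (N-T))) := by
        ring

lemma Fse_step_ge (N T : ℕ) (h : T ≤ N) {c : ℝ} (hc0 : 0 ≤ c) (hc1 : c ≤ 1) :
    S.zeta N * (c * S.Fse N T - c^(T+1) * ∏ r ∈ Finset.Ico (N-T) N, S.zeta r)
      ≤ S.Fse (N+1) (T+1) := by
  have hsub : (N+1) - (T+1) = N - T := by omega
  haveI := S.hpprob (N - T)
  have hb := integral_pow_succ_ge (S.hpS1 (N - T)) hc0 hc1 T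
  have hP : (0:ℝ) ≤ ∏ r ∈ Finset.Ico (N-T) N, S.zeta r :=
    Finset.prod_nonneg fun r _ => (S.zeta_pos r).le
  have hz := (S.zeta_pos N).le
  rw [Fse, Fse, hsub, Finset.prod_Ico_succ_top (by omega)]
  calc S.zeta N * (c * ((∏ r ∈ Finset.Ico (N-T) N, S.zeta r) * ∫ x, x^T ∂ S.p (N-T))
          - c^(T+1) * ∏ r ∈ Finset.Ico (N-T) N, S.zeta r)
      = (∏ r ∈ Finset.Ico (N-T) N, S.zeta r) * S.zeta N
          * (c * (∫ x, x^T ∂ S.p (N-T)) - c^(T+1)) := by ring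
    _ ≤ (∏ r ∈ Finset.Ico (N-T) N, S.zeta r) * S.zeta N * ∫ x, x^(T+1) ∂ S.p (N-T) :=
        mul_le_mul_of_nonneg_left hb (mul_nonneg hP hz)

lemma LLv_step_le (i T : ℕ) : S.LLv (i+1) (T+1) ≤ S.zLim i * (S.η * S.LLv i T) := by
  have hA : Tendsto (fun n => S.Fse (k*n + (i+1)) (T+1)) atTop (nhds (S.LLv (i+1) (T+1))) :=
    S.Fse_conv (i+1) (T+1)
  have hB : Tendsto (fun n => S.zeta (k*n+i) * (S.η * S.Fse (k*n+i) T)) atTop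
      (nhds (S.zLim i * (S.η * S.LLv i T))) :=
    (S.zeta_conv i).mul (tendsto_const_nhds.mul (S.Fse_conv i T))
  refine le_of_tendsto_of_tendsto hA hB ?_
  filter_upwards [Filter.eventually_ge_atTop T] with n hn
  have hkn : n ≤ k * n := Nat.le_mul_of_pos_left n (kpos (k := k))
  have h1 : k*n + (i+1) = (k*n + i) + 1 := by omega
  rw [h1]
  exact S.Fse_step_le (k*n+i) T (by omega)

lemma LLv_step_ge (i T : ℕ) {c : ℝ} (hc0 : 0 ≤ c) (hc1 : c ≤ 1) :
    S.zLim i * (c * S.LLv i T - c^(T+1) * S.Qp i T) ≤ S.LLv (i+1) (T+1) := by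
  have hA : Tendsto (fun n => S.zeta (k*n+i) * (c * S.Fse (k*n+i) T
      - c^(T+1) * ∏ r ∈ Finset.Ico (k*n+i-T) (k*n+i), S.zeta r)) atTop
      (nhds (S.zLim i * (c * S.LLv i T - c^(T+1) * S.Qp i T))) :=
    (S.zeta_conv i).mul ((tendsto_const_nhds.mul (S.Fse_conv i T)).sub
      (tendsto_const_nhds.mul (S.prod_conv i T)))
  have hB : Tendsto (fun n => S.Fse (k*n + (i+1)) (T+1)) atTop (nhds (S.LLv (i+1) (T+1))) :=
    S.Fse_conv (i+1) (T+1)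
  refine le_of_tendsto_of_tendsto hA hB ?_
  filter_upwards [Filter.eventually_ge_atTop T] with n hn
  have hkn : n ≤ k * n := Nat.le_mul_of_pos_left n (kpos (k := k))
  have h1 : k*n + (i+1) = (k*n + i) + 1 := by omega
  rw [h1]
  exact S.Fse_step_ge (k*n+i) T (by omega) hc0 hc1

def pz : ℝ := ∏ j ∈ Finset.range k, S.zLim j

lemma pz_pos : 0 < S.pz := Finset.prod_pos fun j _ => S.zLim_pos j

lemma prod_shift (a : ℕ) : ∏ s ∈ Finset.range k, S.zLim (a + s) = S.pz := by
  induction a with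
  | zero => simp [pz]
  | succ a ih =>
      set g : ℕ → ℝ := fun s => S.zLim (a + s) with hg
      have h1 : ∏ s ∈ Finset.range k, S.zLim (a + 1 + s) = ∏ s ∈ Finset.range k, g (s+1) := by
        refine Finset.prod_congr rfl fun s _ => ?_
        rw [hg]; congr 1; omega
      have h2 := Finset.prod_range_succ' g k
      have h3 := Finset.prod_range_succ g k
      have h4 : g k = g 0 := by
        rw [hg]
        exact S.zLim_congr (by rw [Nat.add_mod_right, Nat.add_zero])
      have h5 : g 0 ≠ 0 := (S.zLim_pos _).ne'
      have h6 : ∏ s ∈ Finset.range k, g (s+1) = ∏ s ∈ Finset.range k, g s := by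
        have := h2.symm.trans h3
        rw [h4] at this
        exact mul_right_cancel₀ h5 this
      rw [h1, h6, ← hg]
      exact ih

lemma Qp_add_t_k (i t : ℕ) : S.Qp i (t + k) = S.pz * S.Qp i t := by
  have hkt : t ≤ k * t := Nat.le_mul_of_pos_left t (kpos (k := k))
  have hdist : k * (t + k) = k*t + k*k := by ring
  have hsm : (k-1)*k = k*k - k := by rw [Nat.sub_mul, one_mul]
  have hk1 : 1 ≤ k := kpos (k := k)
  have hkk : k ≤ k*k := Nat.le_mul_of_pos_left k (kpos (k := k))
  rw [Qp, Finset.prod_range_add]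
  have hfirst : ∏ s ∈ Finset.range t, S.zLim (k*(t+k) + i + s - (t+k)) = S.Qp i t := by
    refine Finset.prod_congr rfl fun s _ => S.zLim_congr ?_
    have h1 : k*(t+k) + i + s - (t+k) = (k*t + i + s - t) + (k-1)*k := by omega
    rw [h1, Nat.add_mul_mod_self_right]
  have hsecond : ∏ s ∈ Finset.range k, S.zLim (k*(t+k) + i + (t+s) - (t+k)) = S.pz := by
    have h2 : ∀ s, k*(t+k) + i + (t+s) - (t+k) = (k*(t+k) + i - k) + s := by
      intro s; omega
    simp only [h2]
    exact S.prod_shift _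
  rw [hfirst, hsecond, mul_comm]

lemma Qp_decomp (i b a : ℕ) : S.Qp i (k * a + b) = S.pz ^ a * S.Qp i b := by
  induction a with
  | zero => simp
  | succ a ih =>
      have h1 : k * (a+1) + b = (k*a + b) + k := by ring
      rw [h1, S.Qp_add_t_k, ih]
      ring

lemma tendsto_cQp (i : ℕ) {c : ℝ} (hc0 : 0 ≤ c) (hθ : c^k * S.pz < 1) :
    Tendsto (fun T => c^(T+1) * S.Qp i T) atTop (nhds 0) := by
  set θ := c^k * S.pz with hθdef
  have hθ0 : 0 ≤ θ := mul_nonneg (pow_nonneg hc0 k) (S.pz_pos).le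
  set M := ∑ b ∈ Finset.range k, c^(b+1) * S.Qp i b with hM
  have hMb : ∀ T, c^(T+1) * S.Qp i T ≤ θ^(T/k) * M := by
    intro T
    have hform : c^(T+1) * S.Qp i T = θ^(T/k) * (c^(T%k+1) * S.Qp i (T%k)) := by
      conv_lhs => rw [← Nat.div_add_mod T k]
      rw [S.Qp_decomp]
      have : c ^ (k * (T/k) + T%k + 1) = (c^k)^(T/k) * c^(T%k+1) := by
        rw [show k*(T/k) + T%k + 1 = k*(T/k) + (T%k+1) from by omega, pow_add, pow_mul]
      rw [this, hθdef, mul_pow]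
      ring
    rw [hform]
    refine mul_le_mul_of_nonneg_left ?_ (pow_nonneg hθ0 _)
    refine Finset.single_le_sum (f := fun b => c^(b+1) * S.Qp i b) ?_ ?_
    · intro b _; exact mul_nonneg (pow_nonneg hc0 _) (S.Qp_nonneg i b)
    · exact Finset.mem_range.2 (Nat.mod_lt T (kpos (k := k)))
  refine squeeze_zero (fun T => mul_nonneg (pow_nonneg hc0 _) (S.Qp_nonneg i T)) hMb ?_
  have h1 : Tendsto (fun T : ℕ => θ^(T/k)) atTop (nhds 0) :=
    (tendsto_pow_atTop_nhds_zero_of_lt_one hθ0 hθ).comp (tendsto_div_const_atTop (k := k))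
  simpa using h1.mul_const M

lemma Fse_le_one (N T : ℕ) (h : T ≤ N) : S.Fse N T ≤ 1 := by
  have := S.identity N T h
  have h2 : 0 ≤ ∑ t ∈ Finset.range T, S.termS N t :=
    Finset.sum_nonneg fun t _ => S.termS_nonneg N t
  linarith

lemma pz_c_le_one {c m : ℝ} (hc0 : 0 < c) (hm : 0 < m)
    (hmass : ∀ T : ℕ, c^T * m ≤ ∫ x, x^T ∂ S.p 0) : S.pz * c^k ≤ 1 := by
  set g : ℕ → ℝ := fun n => (∏ r ∈ Finset.range (k*n), S.zeta r) * (c^(k*n) * m) with hgdef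
  have hPpos : ∀ N : ℕ, 0 < ∏ r ∈ Finset.range N, S.zeta r :=
    fun N => Finset.prod_pos fun r _ => S.zeta_pos r
  have hgpos : ∀ n, 0 < g n := fun n =>
    mul_pos (hPpos _) (mul_pos (pow_pos hc0 _) hm)
  have hgle : ∀ n, g n ≤ 1 := by
    intro n
    have h1 : g n ≤ S.Fse (k*n) (k*n) := by
      rw [Fse, Nat.sub_self, ← Finset.range_eq_Ico]
      exact mul_le_mul_of_nonneg_left (hmass (k*n)) (hPpos (k*n)).le
    exact h1.trans (S.Fse_le_one (k*n) (k*n) le_rfl)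
  have hratio : Tendsto (fun n => g (n+1) / g n) atTop (nhds (S.pz * c^k)) := by
    have heq : ∀ n, g (n+1) / g n = (∏ s ∈ Finset.range k, S.zeta (k*n + s)) * c^k := by
      intro n
      have h1 : k*(n+1) = k*n + k := by ring
      have h2 : (∏ r ∈ Finset.range (k*(n+1)), S.zeta r)
          = (∏ r ∈ Finset.range (k*n), S.zeta r) * ∏ s ∈ Finset.range k, S.zeta (k*n + s) := by
        rw [h1, Finset.prod_range_add]
      have h3 : g (n+1) = ((∏ r ∈ Finset.range (k*n), S.zeta r)
          * ∏ s ∈ Finset.range k, S.zeta (k*n+s)) * (c^(k*n) * c^k * m) := by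
        show (∏ r ∈ Finset.range (k*(n+1)), S.zeta r) * (c^(k*(n+1)) * m) = _
        rw [h2, h1, pow_add]
        all_goals ring
      have h4 : g n = (∏ r ∈ Finset.range (k*n), S.zeta r) * (c^(k*n)*m) := rfl
      rw [h3, h4]
      have h5 := (hPpos (k*n)).ne'
      have h6 := (pow_pos hc0 (k*n)).ne'
      field_simp
    simp only [heq]
    exact (tendsto_finset_prod _ fun s _ => S.zeta_conv s).mul_const _
  exact no_growth hgpos hgle hratio

lemma alpha_step (hηk : S.pz * S.η ^ k ≤ 1) (hηpos : 0 < S.η) (i : ℕ) :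
    S.alphav (i+1) = S.zLim i * (S.η * S.alphav i) := by
  apply le_antisymm
  · have hA : Tendsto (fun T => S.LLv (i+1) (T+1)) atTop (nhds (S.alphav (i+1))) :=
      (Filter.tendsto_add_atTop_iff_nat 1).2 (S.tendsto_alphav (i+1))
    have hB : Tendsto (fun T => S.zLim i * (S.η * S.LLv i T)) atTop
        (nhds (S.zLim i * (S.η * S.alphav i))) :=
      tendsto_const_nhds.mul (tendsto_const_nhds.mul (S.tendsto_alphav i))
    exact le_of_tendsto_of_tendsto hA hB
      (Filter.Eventually.of_forall fun T => S.LLv_step_le i T)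
  · have hstep : ∀ c : ℝ, 0 ≤ c → c < S.η → S.zLim i * (c * S.alphav i) ≤ S.alphav (i+1) := by
      intro c hc0 hcη
      have hc1 : c ≤ 1 := le_trans hcη.le S.hη1
      have hθ : c^k * S.pz < 1 := by
        have h1 : c^k < S.η^k := pow_lt_pow_left₀ hcη hc0 (NeZero.ne k)
        nlinarith [S.pz_pos]
      have hA : Tendsto (fun T => S.zLim i * (c * S.LLv i T - c^(T+1) * S.Qp i T)) atTop
          (nhds (S.zLim i * (c * S.alphav i - 0))) :=
        tendsto_const_nhds.mul ((tendsto_const_nhds.mul (S.tendsto_alphav i)).sub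
          (S.tendsto_cQp i hc0 hθ))
      have hB : Tendsto (fun T => S.LLv (i+1) (T+1)) atTop (nhds (S.alphav (i+1))) :=
        (Filter.tendsto_add_atTop_iff_nat 1).2 (S.tendsto_alphav (i+1))
      have hle := le_of_tendsto_of_tendsto hA hB
        (Filter.Eventually.of_forall fun T => S.LLv_step_ge i T hc0 hc1)
      simpa using hle
    have hseq0 : Tendsto (fun j : ℕ => S.η / (j+2 : ℝ)) atTop (nhds 0) := by
      have h1 : Tendsto (fun n : ℕ => S.η / (n : ℝ)) atTop (nhds 0) :=
        tendsto_const_div_atTop_nhds_zero_nat S.η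
      have h2 := (Filter.tendsto_add_atTop_iff_nat 2).2 h1
      refine h2.congr fun j => ?_
      push_cast
      ring_nf
    have hseq : Tendsto (fun j : ℕ => S.zLim i * ((S.η - S.η/(j+2)) * S.alphav i)) atTop
        (nhds (S.zLim i * (S.η * S.alphav i))) := by
      have h1 : Tendsto (fun j : ℕ => S.η - S.η/(j+2 : ℝ)) atTop (nhds S.η) := by
        have := (tendsto_const_nhds (x := S.η) (f := atTop (α := ℕ))).sub hseq0
        simpa using this
      exact tendsto_const_nhds.mul (h1.mul tendsto_const_nhds)
    refine le_of_tendsto hseq ?_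
    refine Filter.Eventually.of_forall fun j => ?_
    have hj0 : (0:ℝ) ≤ (j:ℝ) := Nat.cast_nonneg j
    have hj2 : (1:ℝ) ≤ (j:ℝ) + 2 := by linarith
    exact hstep _ (by
        have : S.η / ((j:ℝ)+2) ≤ S.η := div_le_self hηpos.le hj2
        linarith) (by
        have : 0 < S.η / ((j:ℝ)+2) := div_pos hηpos (by linarith)
        linarith)

end Ctx




variable {μ : Measure ℝ}

lemma etaSet_nonempty [IsProbabilityMeasure μ] (h : SuppIn μ 1) :
    (0:ℝ) ∈ {x | x ∈ Set.Icc (0:ℝ) 1 ∧ 0 < μ (Set.Icc x 1)} := by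
  constructor
  · exact ⟨le_rfl, zero_le_one⟩
  · have : μ (Set.Icc (0:ℝ) 1) = 1 := by
      have := measure_add_measure_compl (μ := μ) (measurableSet_Icc (a := (0:ℝ)) (b := 1))
      rw [h, add_zero] at this; rw [this]; exact measure_univ
    rw [this]; norm_num

lemma etaSet_bdd : BddAbove {x | x ∈ Set.Icc (0:ℝ) 1 ∧ 0 < μ (Set.Icc x 1)} :=
  ⟨1, fun _ hx => hx.1.2⟩

lemma etaSup_nonneg [IsProbabilityMeasure μ] (h : SuppIn μ 1) : 0 ≤ etaSup μ :=
  le_csSup etaSet_bdd (etaSet_nonempty h)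

lemma etaSup_le_one [IsProbabilityMeasure μ] (h : SuppIn μ 1) : etaSup μ ≤ 1 :=
  csSup_le ⟨0, etaSet_nonempty h⟩ (fun _ hx => hx.1.2)

/-- sets above the support sup are null -/
lemma measure_Icc_eq_zero (h : SuppIn μ 1) {c : ℝ} (hc : etaSup μ < c) (hc0 : 0 ≤ c) :
    μ (Set.Icc c 1) = 0 := by
  by_contra hne
  rcases le_or_gt c 1 with hc1 | hc1
  · have : c ∈ {x | x ∈ Set.Icc (0:ℝ) 1 ∧ 0 < μ (Set.Icc x 1)} :=
      ⟨⟨hc0, hc1⟩, pos_iff_ne_zero.2 hne⟩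
    exact absurd (le_csSup etaSet_bdd this) (not_le.2 hc)
  · rw [Set.Icc_eq_empty (by linarith)] at hne; simp at hne

lemma suppIn_etaSup [IsProbabilityMeasure μ] (h : SuppIn μ 1) {η : ℝ} (hη : etaSup μ ≤ η) :
    SuppIn μ η := by
  have h0 : 0 ≤ η := le_trans (etaSup_nonneg h) hη
  have hsub : (Set.Icc (0:ℝ) η)ᶜ ⊆ (Set.Icc (0:ℝ) 1)ᶜ ∪ ⋃ n : ℕ,
      Set.Icc (η + (1:ℝ)/(n+1)) 1 := by
    intro x hx
    simp only [Set.mem_compl_iff, Set.mem_Icc, not_and, not_le] at hx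
    by_cases hx0 : 0 ≤ x
    · have hxη : η < x := hx hx0
      rcases le_or_gt x 1 with hx1 | hx1
      · right
        obtain ⟨n, hn⟩ := exists_nat_one_div_lt (show (0:ℝ) < x - η by linarith)
        exact Set.mem_iUnion.2 ⟨n, ⟨by push_cast; linarith, hx1⟩⟩
      · left; simp [Set.mem_Icc, not_and, not_le]; intro; linarith
    · left; simp [Set.mem_Icc]; intro h'; exact absurd h' hx0
  refine measure_mono_null hsub (measure_union_null h (measure_iUnion_null fun n => ?_))
  have hn : (0:ℝ) < 1/(n+1) := by positivity
  exact measure_Icc_eq_zero h (by linarith) (by linarith)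

lemma exists_pos_mass [IsProbabilityMeasure μ] (h : SuppIn μ 1) (hpos : 0 < etaSup μ) :
    ∃ c > 0, 0 < μ (Set.Icc c 1) := by
  obtain ⟨x, hxS, hxgt⟩ := exists_lt_of_lt_csSup ⟨0, etaSet_nonempty h⟩
    (show etaSup μ / 2 < etaSup μ by linarith)
  exact ⟨x, lt_of_le_of_lt (by linarith) hxgt, hxS.2⟩

/-- any value below etaSup has mass above it -/
lemma mass_above [IsProbabilityMeasure μ] (h : SuppIn μ 1) {c : ℝ} (hc : c < etaSup μ) :
    0 < μ (Set.Icc c 1) := by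
  obtain ⟨x, hxS, hxgt⟩ := exists_lt_of_lt_csSup ⟨0, etaSet_nonempty h⟩ hc
  exact lt_of_lt_of_le hxS.2 (measure_mono (Set.Icc_subset_Icc_left hxgt.le))


lemma integral_pow_ge_meas_Ici {μ : Measure ℝ} [IsFiniteMeasure μ] {c : ℝ}
    (h : SuppIn μ 1) (hc0 : 0 ≤ c) (T : ℕ) :
    c ^ T * (μ (Set.Ici c)).toReal ≤ ∫ x, x ^ T ∂μ := by
  have : ∫ x, Set.indicator (Set.Ici c) (fun _ => c ^ T) x ∂μ ≤ ∫ x, x ^ T ∂μ := by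
    refine integral_mono_ae ((integrable_const _).indicator measurableSet_Ici)
      (integrable_pow h T) ?_
    filter_upwards [ae_mem h] with x hx
    by_cases hxm : x ∈ Set.Ici c
    · rw [Set.indicator_of_mem hxm]; exact pow_le_pow_left₀ hc0 hxm T
    · rw [Set.indicator_of_notMem hxm]; exact pow_nonneg hx.1 T
  rwa [integral_indicator_const _ measurableSet_Ici, smul_eq_mul, mul_comm] at this

/-- The geometric-series expansion of the `A`-matrix entries. -/
lemma Aentry {ν : Measure ℝ} [IsProbabilityMeasure ν] (hν : SuppIn ν 1)
    {z b : ℝ} (hz : 0 < z) (hb : 0 < b) {k : ℕ} (hk : 0 < k) (u : ℕ)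
    (hsum : Summable fun s : ℕ => z^(u+s*k) * (b * ∫ x, x^(u+s*k) ∂ν)) :
    ∫ x, (z*x)^u / (1 - (z*x)^k) * b ∂ν
      = ∑' s : ℕ, z^(u+s*k) * (b * ∫ x, x^(u+s*k) ∂ν) := by
  -- the set where z*x ≥ 1 is null
  have hnull : ν (Set.Ici (1/z)) = 0 := by
    by_contra hne
    have hm : 0 < (ν (Set.Ici (1/z))).toReal :=
      ENNReal.toReal_pos hne (measure_ne_top _ _)
    set m := (ν (Set.Ici (1/z))).toReal with hmdef
    have hterm : ∀ s : ℕ, b * m ≤ z^(u+s*k) * (b * ∫ x, x^(u+s*k) ∂ν) := by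
      intro s
      have h1 := integral_pow_ge_meas_Ici hν (by positivity : (0:ℝ) ≤ 1/z) (u+s*k)
      have h2 : (1/z : ℝ)^(u+s*k) = (z^(u+s*k))⁻¹ := by
        rw [one_div, inv_pow]
      rw [h2, ← hmdef] at h1
      have h3 : z^(u+s*k) * ((z^(u+s*k))⁻¹ * m) ≤ z^(u+s*k) * ∫ x, x^(u+s*k) ∂ν :=
        mul_le_mul_of_nonneg_left h1 (by positivity)
      rw [← mul_assoc, mul_inv_cancel₀ (by positivity), one_mul] at h3
      nlinarith
    have htend := hsum.tendsto_atTop_zero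
    have := ge_of_tendsto htend (Filter.Eventually.of_forall hterm)
    nlinarith
  -- a.e. facts
  have hae : ∀ᵐ x ∂ν, x ∈ Set.Icc (0:ℝ) 1 ∧ z*x < 1 := by
    have h1 : ∀ᵐ x ∂ν, x ∉ Set.Ici (1/z) :=
      (MeasureTheory.measure_eq_zero_iff_ae_notMem).mp hnull
    filter_upwards [ae_mem hν, h1] with x hx1 hx2
    refine ⟨hx1, ?_⟩
    rw [Set.mem_Ici, not_le, lt_div_iff₀ hz] at hx2
    calc z * x = x * z := mul_comm z x
      _ < 1 := hx2
  set G : ℕ → ℝ → ℝ := fun s x => (z*x)^(u+s*k) * b with hG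
  have hGfun : ∀ s : ℕ, (fun x => G s x) = fun x : ℝ => (z^(u+s*k) * b) * x^(u+s*k) := by
    intro s; funext x; rw [hG]; simp only [mul_pow]; ring
  have hGint : ∀ s, Integrable (G s) ν := by
    intro s
    rw [hG]
    simp only
    have := (integrable_pow hν (u+s*k)).const_mul (z^(u+s*k) * b)
    refine this.congr' ?_ ?_
    · exact (Continuous.aestronglyMeasurable (by continuity))
    · filter_upwards with x
      simp only [mul_pow]; ring
  have hGval : ∀ s, ∫ x, G s x ∂ν = z^(u+s*k) * (b * ∫ x, x^(u+s*k) ∂ν) := by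
    intro s
    rw [hGfun s, integral_const_mul]
    ring
  have hGnonneg : ∀ s, ∀ᵐ x ∂ν, 0 ≤ G s x := by
    intro s
    filter_upwards [hae] with x hx
    rw [hG]
    have : 0 ≤ z*x := mul_nonneg hz.le hx.1.1
    positivity
  -- lintegral summability
  have hlint : ∀ s, ∫⁻ x, ‖G s x‖₊ ∂ν = ENNReal.ofReal (∫ x, G s x ∂ν) := by
    intro s
    rw [ofReal_integral_eq_lintegral_ofReal (hGint s) (hGnonneg s)]
    refine lintegral_congr_ae ?_
    filter_upwards [hGnonneg s] with x hx
    rw [← Real.enorm_eq_ofReal hx, enorm_eq_nnnorm]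
  have hfin : (∑' s : ℕ, ∫⁻ x, ‖G s x‖₊ ∂ν) ≠ ⊤ := by
    simp only [hlint, hGval]
    rw [← ENNReal.ofReal_tsum_of_nonneg ?hnn hsum]
    · exact ENNReal.ofReal_ne_top
    case hnn =>
      intro s
      exact mul_nonneg (by positivity) (mul_nonneg hb.le (integral_pow_nonneg hν _))
  have hmeas : ∀ s, AEStronglyMeasurable (G s) ν := fun s => (hGint s).1
  have hswap := MeasureTheory.integral_tsum hmeas hfin
  have hptw : ∀ᵐ x ∂ν, (∑' s, G s x) = (z*x)^u / (1 - (z*x)^k) * b := by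
    filter_upwards [hae] with x hx
    have hr0 : 0 ≤ z*x := mul_nonneg hz.le hx.1.1
    have hr1 : z*x < 1 := hx.2
    have hrk1 : (z*x)^k < 1 := pow_lt_one₀ hr0 hr1 hk.ne'
    have hfe : (fun s => G s x) = fun s => ((z*x)^u * b) * ((z*x)^k)^s := by
      funext s; rw [hG]; simp only
      rw [pow_add, pow_mul]; ring
    rw [hfe, tsum_mul_left, tsum_geometric_of_lt_one (pow_nonneg hr0 k) hrk1]
    rw [div_eq_mul_inv]; ring
  calc ∫ x, (z*x)^u/(1-(z*x)^k) * b ∂ν = ∫ x, (∑' s, G s x) ∂ν :=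
        (integral_congr_ae hptw).symm
    _ = ∑' s, ∫ x, G s x ∂ν := hswap
    _ = ∑' s, z^(u+s*k) * (b * ∫ x, x^(u+s*k) ∂ν) := by simp only [hGval]

end S12

/-- Let `V` be the vector with `v_i = z_{k−1} z_{k−2} ⋯ z_i / z̄^{k−i}` (so
`v₀ = 1`). Then there exists `α ≥ 0` such that `A(z̄) V + α·𝟏 = V`; furthermore if
`z̄ < 1/η₀` then `α = 0`. -/
theorem stmt_12 (k : ℕ) [NeZero k] (β : Fin k → ℝ) (q : Fin k → Measure ℝ)
    [∀ i, IsProbabilityMeasure (q i)]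
    (p₀ : Measure ℝ) [IsProbabilityMeasure p₀]
    (hβ : ∀ i, β i ∈ Set.Ioo (0:ℝ) 1)
    (hq : ∀ i, q i (Set.Icc (0:ℝ) 1)ᶜ = 0) (hp₀ : p₀ (Set.Icc (0:ℝ) 1)ᶜ = 0)
    (hη : ∀ i, 0 < etaSup (q i) ∧ etaSup (q i) ≤ etaSup p₀)
    (p : ℕ → Measure ℝ) (w : ℕ → ℝ)
    (hp0 : p 0 = p₀) (hrec : KingmanRec k β q p w)
    (wbar : Fin k → ℝ)
    (hconv : ∀ i : Fin k, Tendsto (fun n => w (k * n + (i : ℕ))) atTop (nhds (wbar i)))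
    (zf : Fin k → ℝ) (hzf : ∀ i : Fin k, zf i = (1 - β (i + 1)) / wbar i)
    (zbar : ℝ) (hzbar : zbar = (∏ i, zf i) ^ ((1 : ℝ) / k))
    (V : Fin k → ℝ)
    (hV : ∀ i : Fin k,
      V i = (∏ ℓ ∈ Finset.Ico (i : ℕ) k, zf ((ℓ : ℕ) : Fin k)) / zbar ^ (k - (i : ℕ))) :
    ∃ α : ℝ, 0 ≤ α ∧ (∀ i, (Amat k β q zbar).mulVec V i + α = V i) ∧
      (zbar < 1 / etaSup p₀ → α = 0) := by
  classical
  obtain ⟨hw, hrec2⟩ := hrec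
  have hk : 0 < k := Nat.pos_of_ne_zero (NeZero.ne k)
  set η := etaSup p₀ with hηdef
  have hp₀1 : S12.SuppIn p₀ 1 := hp₀
  have hη0 : 0 ≤ η := S12.etaSup_nonneg hp₀1
  have hη1 : η ≤ 1 := S12.etaSup_le_one hp₀1
  have hηpos : 0 < η := lt_of_lt_of_le (hη ⟨0, hk⟩).1 (hη ⟨0, hk⟩).2
  have hq1 : ∀ i, S12.SuppIn (q i) 1 := fun i => hq i
  have hqSη : ∀ i, S12.SuppIn (q i) η := fun i => S12.suppIn_etaSup (hq1 i) (hη i).2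
  have hqmass : ∀ i, ∃ c > 0, 0 < q i (Set.Icc c 1) :=
    fun i => S12.exists_pos_mass (hq1 i) (hη i).1
  have hp₀η : S12.SuppIn p₀ η := S12.suppIn_etaSup hp₀1 le_rfl
  -- basic induction
  have basic : ∀ n, IsProbabilityMeasure (p n) ∧ S12.SuppIn (p n) η ∧ 0 < w n := by
    intro n
    induction n with
    | zero =>
        haveI hpr : IsProbabilityMeasure (p 0) := hp0 ▸ inferInstance
        refine ⟨hpr, hp0 ▸ hp₀η, ?_⟩
        obtain ⟨c, hc, hm⟩ := S12.exists_pos_mass hp₀1 hηpos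
        rw [hw 0]
        have h1 : ∫ x, x ∂ p 0 = ∫ x, x^1 ∂ p 0 := by simp
        rw [h1, hp0]
        have h2 := S12.integral_pow_ge_meas hp₀1 hc.le 1
        have h3 : 0 < (p₀ (Set.Icc c 1)).toReal :=
          ENNReal.toReal_pos hm.ne' (measure_ne_top _ _)
        nlinarith
    | succ n ih =>
        haveI := ih.1
        haveI := ‹∀ i, IsProbabilityMeasure (q i)› ((n+1:ℕ) : Fin k)
        have st := S12.step (η := η) ih.2.1 (hqSη ((n+1:ℕ):Fin k)) hη1 (hβ ((n+1:ℕ):Fin k)) (hw n) ih.2.2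
        refine ⟨(hrec2 n).symm ▸ st.1, (hrec2 n).symm ▸ st.2.1, ?_⟩
        have hint := st.2.2 1
        rw [← hrec2 n] at hint
        rw [hw (n+1)]
        have h1 : ∫ x, x ∂ p (n+1) = ∫ x, x^1 ∂ p (n+1) := by simp
        rw [h1, hint]
        obtain ⟨c, hc, hm⟩ := hqmass ((n+1:ℕ) : Fin k)
        have h2 := S12.integral_pow_ge_meas (hq1 ((n+1:ℕ):Fin k)) hc.le 1
        have h3 : 0 < ((q ((n+1:ℕ):Fin k)) (Set.Icc c 1)).toReal :=
          ENNReal.toReal_pos hm.ne' (measure_ne_top _ _)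
        have h4 : 0 ≤ ((1 - β ((n+1:ℕ):Fin k))/w n) * ∫ x, x^(1+1) ∂ p n :=
          mul_nonneg (div_nonneg (by linarith [(hβ ((n+1:ℕ):Fin k)).2]) ih.2.2.le)
            (S12.integral_pow_nonneg ih.2.1 2)
        have h5 : 0 < ∫ x, x^1 ∂ q ((n+1:ℕ):Fin k) :=
          lt_of_lt_of_le (by nlinarith) h2
        have h6 : 0 < β ((n+1:ℕ):Fin k) * ∫ x, x^1 ∂ q ((n+1:ℕ):Fin k) :=
          mul_pos (hβ ((n+1:ℕ):Fin k)).1 h5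
        linarith
  -- the context
  have hqpr : ∀ i, IsProbabilityMeasure (q i) := inferInstance
  set S : S12.Ctx k := S12.Ctx.mk β q p w η wbar hβ hqpr hqSη hqmass
    hη0 hη1 hw hrec2 (fun n => (basic n).1) (fun n => (basic n).2.1)
    (fun n => (basic n).2.2) hconv with hSdef
  -- positivity facts
  have hzfpos : ∀ i, 0 < zf i := by
    intro i
    rw [hzf i]
    exact div_pos (by linarith [(hβ (i+1)).2]) (S.wbar_pos i)
  have hprodpos : 0 < ∏ i, zf i := Finset.prod_pos fun i _ => hzfpos i
  have hzbarpos : 0 < zbar := hzbar ▸ Real.rpow_pos_of_pos hprodpos _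
  have hzbk : zbar^k = ∏ i, zf i := by
    rw [hzbar, one_div, Real.rpow_inv_natCast_pow hprodpos.le (NeZero.ne k)]
  have hzLim_eq : ∀ j : ℕ, S.zLim j = zf ((j : ℕ) : Fin k) := by
    intro j
    rw [hzf ((j:ℕ) : Fin k)]
    rfl
  have hprodrange : ∏ ℓ ∈ Finset.range k, zf ((ℓ:ℕ):Fin k) = zbar^k := by
    rw [hzbk, ← Fin.prod_univ_eq_prod_range (fun j => zf ((j:ℕ):Fin k)) k]
    exact Finset.prod_congr rfl fun i _ => by rw [Fin.cast_val_eq_self]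
  have hpz : S.pz = zbar^k := by
    rw [S12.Ctx.pz, ← hprodrange]
    exact Finset.prod_congr rfl fun j _ => hzLim_eq j
  -- V facts
  have hVpos : ∀ i, 0 < V i := by
    intro i
    rw [hV i]
    exact div_pos (Finset.prod_pos fun ℓ _ => hzfpos _) (pow_pos hzbarpos _)
  have hV0 : V 0 = 1 := by
    rw [hV 0]
    simp only [Fin.val_zero, Nat.sub_zero]
    rw [← Finset.range_eq_Ico, hprodrange, div_self (pow_ne_zero _ hzbarpos.ne')]
  have hVstep : ∀ m : Fin k, zbar * V m = zf m * V (m+1) := by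
    intro m
    rcases eq_or_lt_of_le (Nat.succ_le_of_lt m.isLt) with hlast0 | hlt0
    · have hlast : (m:ℕ) + 1 = k := hlast0
      have hm1 : (m + 1 : Fin k) = 0 := by
        conv_lhs => rw [← Fin.cast_val_eq_self m]
        rw [← Nat.cast_one, ← Nat.cast_add, hlast, Fin.natCast_self]
      rw [hm1, hV0, hV m]
      have hico : Finset.Ico (m : ℕ) k = {(m : ℕ)} := by
        have h7 : Finset.Ico (m:ℕ) ((m:ℕ)+1) = {(m:ℕ)} := Nat.Ico_succ_singleton (m:ℕ)
        rwa [hlast] at h7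
      rw [hico, Finset.prod_singleton, Fin.cast_val_eq_self]
      have hks : k - (m : ℕ) = 1 := by omega
      rw [hks, pow_one]
      field_simp
    · have hlt : (m:ℕ) + 1 < k := hlt0
      have hm1 : (m+1 : Fin k) = (((m : ℕ) + 1 : ℕ) : Fin k) := by
        rw [Nat.cast_add, Nat.cast_one, Fin.cast_val_eq_self]
      rw [hV m, hm1, hV (((m:ℕ)+1 : ℕ) : Fin k)]
      have hval : ((((m:ℕ)+1:ℕ) : Fin k) : ℕ) = (m:ℕ) + 1 := by
        rw [Fin.val_natCast]; exact Nat.mod_eq_of_lt hlt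
      rw [hval, Finset.prod_eq_prod_Ico_succ_bot m.isLt, Fin.cast_val_eq_self]
      have hksub : k - (m:ℕ) = (k - ((m:ℕ)+1)) + 1 := by omega
      rw [hksub, pow_succ]
      have hz0 : zbar ≠ 0 := hzbarpos.ne'
      have hzp : zbar ^ (k - ((m:ℕ)+1)) ≠ 0 := pow_ne_zero _ hz0
      field_simp
  -- Qp in terms of V
  have hQpeq : ∀ i t : ℕ, S.Qp i t * V ((i:ℕ):Fin k) = zbar^t * V (S12.Ctx.ctk (k:=k) i t) := by
    intro i t
    induction t with
    | zero =>
        have h1 : S.Qp i 0 = 1 := by rw [S12.Ctx.Qp]; simp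
        have h2 : S12.Ctx.ctk (k:=k) i 0 = ((i:ℕ) : Fin k) := by
          unfold S12.Ctx.ctk; congr 1; omega
        rw [h1, h2, pow_zero]; all_goals ring
    | succ t ih =>
        have hkt : t ≤ k*t := Nat.le_mul_of_pos_left t hk
        have hd : k*(t+1) = k*t + k := by ring
        have hrest : ∏ s ∈ Finset.range t, S.zLim (k*(t+1) + i + (s+1) - (t+1)) = S.Qp i t := by
          refine Finset.prod_congr rfl fun s _ => S.zLim_congr ?_
          have h5 : k*(t+1) + i + (s+1) - (t+1) = (k*t + i + s - t) + k := by omega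
          rw [h5, Nat.add_mod_right]
        have hQsucc : S.Qp i (t+1) = S.zLim (k*(t+1) + i - (t+1)) * S.Qp i t := by
          rw [S12.Ctx.Qp, Finset.prod_range_succ']
          rw [show k*(t+1) + i + 0 - (t+1) = k*(t+1) + i - (t+1) from by omega]
          rw [hrest, mul_comm]
        have hctk : S12.Ctx.ctk (k:=k) i t = ((k*(t+1) + i - (t+1) : ℕ) : Fin k) + 1 := by
          have h1 : S12.Ctx.ctk (k:=k) i t
              = (((k*(t+1) + i - (t+1)) + 1 : ℕ) : Fin k) := by
            unfold S12.Ctx.ctk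
            refine S12.natCast_congr ?_
            have h6 : (k*(t+1) + i - (t+1)) + 1 = (k*t + i - t) + k := by omega
            rw [h6, Nat.add_mod_right]
          rw [h1, Nat.cast_add, Nat.cast_one]
        have hctk1 : S12.Ctx.ctk (k:=k) i (t+1) = ((k*(t+1) + i - (t+1) : ℕ) : Fin k) := rfl
        rw [hQsucc, mul_assoc, ih, hctk, hzLim_eq (k*(t+1) + i - (t+1)), hctk1]
        have hvs := hVstep (((k*(t+1) + i - (t+1) : ℕ)) : Fin k)
        calc zf ((k*(t+1)+i-(t+1) : ℕ) : Fin k)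
              * (zbar^t * V (((k*(t+1)+i-(t+1) : ℕ) : Fin k) + 1))
            = zbar^t * (zf ((k*(t+1)+i-(t+1):ℕ):Fin k)
                * V (((k*(t+1)+i-(t+1):ℕ):Fin k) + 1)) := by ring
          _ = zbar^t * (zbar * V ((k*(t+1)+i-(t+1):ℕ):Fin k)) := by rw [← hvs]
          _ = zbar^(t+1) * V ((k*(t+1)+i-(t+1):ℕ):Fin k) := by ring
  -- pz * η^k ≤ 1
  have hpzη : S.pz * η^k ≤ 1 := by
    have hstep : ∀ c : ℝ, 0 < c → c < η → S.pz * c^k ≤ 1 := by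
      intro c hc0 hcη
      have hm : 0 < (p₀ (Set.Icc c 1)).toReal :=
        ENNReal.toReal_pos (S12.mass_above hp₀1 hcη).ne' (measure_ne_top _ _)
      refine S.pz_c_le_one hc0 hm ?_
      intro T
      have h0 : S.p 0 = p₀ := hp0
      rw [h0]
      exact S12.integral_pow_ge_meas hp₀1 hc0.le T
    have hseq0 : Tendsto (fun j : ℕ => η/(j+2:ℝ)) atTop (nhds 0) := by
      have h1 : Tendsto (fun n : ℕ => η / (n : ℝ)) atTop (nhds 0) :=
        tendsto_const_div_atTop_nhds_zero_nat η
      have h2 := (Filter.tendsto_add_atTop_iff_nat 2).2 h1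
      refine h2.congr fun j => ?_
      push_cast
      ring_nf
    have h1 : Tendsto (fun j : ℕ => S.pz * (η - η/(j+2))^k) atTop (nhds (S.pz * η^k)) := by
      have h2 : Tendsto (fun j : ℕ => η - η/(j+2:ℝ)) atTop (nhds η) := by
        have := (tendsto_const_nhds (x := η) (f := atTop (α := ℕ))).sub hseq0
        simpa using this
      exact tendsto_const_nhds.mul (h2.pow k)
    refine le_of_tendsto h1 (Filter.Eventually.of_forall fun j => ?_)
    have hj2 : (0:ℝ) < (j:ℝ) + 2 := by positivity
    have hlt : η/((j:ℝ)+2) < η := by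
      rw [div_lt_iff₀ hj2]
      nlinarith
    have hpos : 0 < η/((j:ℝ)+2) := div_pos hηpos hj2
    exact hstep _ (by linarith) (by linarith)
  have hzη1 : zbar * η ≤ 1 := by
    have h1 : (zbar*η)^k ≤ 1 := by rw [mul_pow, ← hpz]; exact hpzη
    exact (pow_le_one_iff_of_nonneg (by positivity) (NeZero.ne k)).1 h1
  -- the alpha chain
  set sα : ℕ → ℝ := fun i => S.alphav i * V ((i:ℕ):Fin k) with hsα
  have hchain : ∀ i : ℕ, sα (i+1) = (zbar*η) * sα i := by
    intro i
    have ha := S.alpha_step hpzη hηpos i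
    have hcast : (((i+1:ℕ)) : Fin k) = ((i:ℕ):Fin k) + 1 := by push_cast; ring
    rw [hsα]
    simp only
    rw [ha, hcast, hzLim_eq i]
    have hvs := hVstep ((i:ℕ):Fin k)
    calc zf ((i:ℕ):Fin k) * (η * S.alphav i) * V (((i:ℕ):Fin k)+1)
        = (η * S.alphav i) * (zf ((i:ℕ):Fin k) * V (((i:ℕ):Fin k)+1)) := by ring
      _ = (η * S.alphav i) * (zbar * V ((i:ℕ):Fin k)) := by rw [← hvs]
      _ = (zbar*η) * (S.alphav i * V ((i:ℕ):Fin k)) := by ring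
  have hpow : ∀ i : ℕ, sα i = (zbar*η)^i * sα 0 := by
    intro i
    induction i with
    | zero => simp
    | succ i ih => rw [hchain i, ih]; ring
  have hper : sα k = sα 0 := by
    rw [hsα]
    simp only
    have h1 : S.alphav k = S.alphav 0 := by
      have := S.alphav_add_k 0
      rwa [zero_add] at this
    rw [h1, Fin.natCast_self, Nat.cast_zero]
  have hzeroclaim : zbar*η < 1 → sα 0 = 0 := by
    intro hlt
    have h1 : sα 0 = (zbar*η)^k * sα 0 := by rw [← hpow k]; exact hper.symm
    have h2 : (zbar*η)^k < 1 := pow_lt_one₀ (by positivity) hlt (NeZero.ne k)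
    have h3 : sα 0 * (1 - (zbar*η)^k) = 0 := by linear_combination h1
    rcases mul_eq_zero.mp h3 with h4 | h4
    · exact h4
    · linarith
  have hconst : ∀ i, sα i = sα 0 := by
    intro i
    rcases lt_or_eq_of_le hzη1 with hlt | heq
    · rw [hpow i, hzeroclaim hlt, mul_zero]
    · rw [hpow i, heq, one_pow, one_mul]
  have hsα0 : sα 0 = S.alphav 0 := by
    rw [hsα]; simp only [Nat.cast_zero]
    rw [hV0, mul_one]
  -- the matrix computation
  have hmul : ∀ i : Fin k, (Amat k β q zbar).mulVec V i = V i * (1 - S.alphav (i:ℕ)) := by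
    intro i
    have hsum_f := S.hasSum_Qbq (i:ℕ)
    set u : Fin k → ℕ := fun j => ((i - j : Fin k) : ℕ) with hu
    have hct : ∀ (j : Fin k) (s : ℕ), S12.Ctx.ctk (k:=k) (i:ℕ) (u j + s*k) = j := by
      intro j s
      set t := u j + s*k with ht
      have hkt : t ≤ k*t := Nat.le_mul_of_pos_left t hk
      have hsm : (k-1)*t = k*t - t := by rw [Nat.sub_mul, one_mul]
      have h1 : k*t + (i:ℕ) - t = (k-1)*t + (i:ℕ) := by omega
      unfold S12.Ctx.ctk
      rw [h1]
      push_cast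
      have hneg : ((k-1:ℕ) : Fin k) = -1 := by
        have h2 : ((k-1:ℕ):Fin k) + 1 = 0 := by
          have h3 : ((k-1:ℕ):Fin k) + ((1:ℕ):Fin k) = (((k-1)+1 :ℕ) : Fin k) :=
            (Nat.cast_add _ _).symm
          rw [Nat.cast_one] at h3
          rw [h3, show (k-1)+1 = k from by omega, Fin.natCast_self]
        exact eq_neg_of_add_eq_zero_left h2
      have htc : ((t:ℕ) : Fin k) = i - j := by
        rw [ht]
        push_cast [Fin.natCast_self]
        simp [hu, Fin.cast_val_eq_self]
      rw [show (((k - 1) * t : ℕ) : Fin k) = ((k-1 : ℕ) : Fin k) * ((t:ℕ) : Fin k) from Fin.ext (by rw [Fin.val_mul, Fin.val_natCast, Fin.val_natCast, Fin.val_natCast, Nat.mul_mod]), hneg, htc]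
      open Fin.CommRing in ring
    have hfe : ∀ (j : Fin k) (s : ℕ), S.Qp (i:ℕ) (u j + s*k) * S.bqv (i:ℕ) (u j + s*k)
        = (V j / V i) * (zbar^(u j + s*k) * (β j * ∫ x, x^(u j + s*k) ∂ q j)) := by
      intro j s
      have h1 := hQpeq (i:ℕ) (u j + s*k)
      rw [hct j s, Fin.cast_val_eq_self] at h1
      have hQ : S.Qp (i:ℕ) (u j + s*k) = zbar^(u j + s*k) * V j / V i := by
        rw [eq_div_iff (hVpos i).ne']
        linear_combination h1
      have hbq : S.bqv (i:ℕ) (u j + s*k) = β j * ∫ x, x^(u j + s*k) ∂ q j := by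
        rw [S12.Ctx.bqv, hct j s]
      rw [hQ, hbq]
      ring
    have hsum_comp : ∀ j : Fin k,
        Summable (fun s : ℕ => S.Qp (i:ℕ) (u j + s*k) * S.bqv (i:ℕ) (u j + s*k)) := by
      intro j
      have hinj : Function.Injective (fun s : ℕ => u j + s*k) := by
        intro a b hab
        simp only at hab
        have h2 : a * k = b * k := by omega
        exact Nat.eq_of_mul_eq_mul_right hk h2
      exact hsum_f.summable.comp_injective hinj
    have hsum_g : ∀ j : Fin k,
        Summable (fun s : ℕ => zbar^(u j + s*k) * (β j * ∫ x, x^(u j + s*k) ∂ q j)) := by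
      intro j
      have h1 := (hsum_comp j).mul_left (V i / V j)
      refine h1.congr fun s => ?_
      rw [hfe j s, ← mul_assoc]
      have hvv : V i / V j * (V j / V i) = 1 := by
        field_simp [(hVpos i).ne', (hVpos j).ne']
      rw [hvv, one_mul]
    have hAent : ∀ j : Fin k, Amat k β q zbar i j
        = ∑' s:ℕ, zbar^(u j + s*k) * (β j * ∫ x, x^(u j + s*k) ∂ q j) := by
      intro j
      haveI := ‹∀ i, IsProbabilityMeasure (q i)› j
      have h1 := S12.Aentry (hq1 j) hzbarpos (hβ j).1 hk (u j) (hsum_g j)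
      exact h1
    have hAV : ∀ j : Fin k, Amat k β q zbar i j * V j
        = V i * ∑' s:ℕ, S.Qp (i:ℕ) (u j + s*k) * S.bqv (i:ℕ) (u j + s*k) := by
      intro j
      have h1 : ∑' s:ℕ, S.Qp (i:ℕ) (u j + s*k) * S.bqv (i:ℕ) (u j + s*k)
          = (V j / V i) * ∑' s:ℕ, zbar^(u j + s*k) * (β j * ∫ x, x^(u j + s*k) ∂ q j) := by
        rw [← tsum_mul_left]
        exact tsum_congr fun s => hfe j s
      rw [h1, hAent j]
      field_simp [(hVpos i).ne', (hVpos j).ne']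
      congr 1; funext s; ring
    -- the equivalence
    have hdm : ∀ t : ℕ, t % k + (t/k)*k = t := by
      intro t
      have h1 := Nat.div_add_mod t k
      have h2 : k * (t/k) = (t/k) * k := mul_comm _ _
      omega
    set e : Fin k × ℕ ≃ ℕ := {
      toFun := fun pa => u pa.1 + pa.2 * k
      invFun := fun t => (i - (t : Fin k), t / k)
      left_inv := by
        rintro ⟨j, s⟩
        simp only
        have hcast : ((u j + s*k : ℕ) : Fin k) = i - j := by
          push_cast [Fin.natCast_self]
          simp [hu, Fin.cast_val_eq_self]
        rw [Prod.mk.injEq]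
        constructor
        · rw [hcast, sub_sub_cancel]
        · rw [Nat.add_mul_div_right _ _ hk, Nat.div_eq_of_lt (Fin.is_lt _), zero_add]
      right_inv := by
        intro t
        simp only
        have h1 : i - (i - (t : Fin k)) = (t : Fin k) := sub_sub_cancel i _
        rw [hu]
        simp only
        rw [h1, Fin.val_natCast]
        exact hdm t } with he_def
    have he : HasSum ((fun t => S.Qp (i:ℕ) t * S.bqv (i:ℕ) t) ∘ e) (1 - S.alphav (i:ℕ)) :=
      (Equiv.hasSum_iff e).2 hsum_f
    have htsum : ∑' (pa : Fin k × ℕ),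
        S.Qp (i:ℕ) (e pa) * S.bqv (i:ℕ) (e pa) = 1 - S.alphav (i:ℕ) := he.tsum_eq
    have hprodsum : ∑' (pa : Fin k × ℕ), S.Qp (i:ℕ) (e pa) * S.bqv (i:ℕ) (e pa)
        = ∑' (j : Fin k), ∑' (s : ℕ), S.Qp (i:ℕ) (u j + s*k) * S.bqv (i:ℕ) (u j + s*k) :=
      Summable.tsum_prod' he.summable (fun j => hsum_comp j)
    have hfin : ∑ j : Fin k, ∑' (s : ℕ), S.Qp (i:ℕ) (u j + s*k) * S.bqv (i:ℕ) (u j + s*k)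
        = 1 - S.alphav (i:ℕ) := by
      rw [← tsum_fintype (L := SummationFilter.unconditional _), ← hprodsum, htsum]
    have hmv : (Amat k β q zbar).mulVec V i = ∑ j : Fin k, Amat k β q zbar i j * V j := rfl
    rw [hmv]
    calc ∑ j : Fin k, Amat k β q zbar i j * V j
        = ∑ j : Fin k, V i * ∑' (s : ℕ), S.Qp (i:ℕ) (u j + s*k) * S.bqv (i:ℕ) (u j + s*k) :=
          Finset.sum_congr rfl fun j _ => hAV j
      _ = V i * ∑ j : Fin k, ∑' (s : ℕ), S.Qp (i:ℕ) (u j + s*k) * S.bqv (i:ℕ) (u j + s*k) := by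
          rw [Finset.mul_sum]
      _ = V i * (1 - S.alphav (i:ℕ)) := by rw [hfin]
  -- conclusion
  refine ⟨S.alphav 0, S.alphav_nonneg 0, ?_, ?_⟩
  · intro i
    rw [hmul i]
    have h1 : S.alphav 0 = S.alphav (i:ℕ) * V i := by
      have h2 := hconst (i:ℕ)
      rw [hsα0] at h2
      rw [← h2, hsα]
      simp only
      rw [Fin.cast_val_eq_self]
    rw [h1]
    ring
  · intro hlt
    have hzη : zbar * η < 1 := by
      rw [lt_div_iff₀ hηpos] at hlt
      linarith
    have := hzeroclaim hzη
    rw [hsα0] at this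
    exact this
end
end
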